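/- arXiv:2505.16511 — 5 statements merged into one kernel-verified Lean document; each statement's English description precedes it below -/
import Mathlib

section
/- Consider the multilayer NODE system in which, for each layer i+1, the scalar activation φ^{i+1} is incrementally sector bounded by [α^{i+1}, β^{i+1}] on ℝ. Suppose there exist a symmetric positive definite P ∈ ℝ^{n×n} and constants 0 < p̲ ≤ p̄ and γ > 0 with p̲·I ⪯ P ⪯ p̄·I such that for all vectors v⁰ ∈ ℝⁿ and vⁱ ∈ ℝ^{mᵢ}, i = 1,…,k: ⟨v⁰, (AᵀP + PA + γP)·v⁰⟩ + 2·⟨v⁰, P·W^{k+1}·vᵏ⟩ − 2·Σ_{i=0}^{k−1} ⟨v^{i+1} − α^{i+1}·W^{i+1}·vⁱ, v^{i+1} − β^{i+1}·W^{i+1}·vⁱ⟩ ≤ 0. Then any two solutions x₁, x₂ of the multilayer NODE system satisfy ‖x₁(t) − x₂(t)‖ ≤ √(p̄/p̲) · e^{−(γ/2)·t} · ‖x₁(0) − x₂(0)‖ for all t ≥ 0. -/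
open Matrix

/-- The Euclidean norm of a vector in `ℝⁿ`. -/
noncomputable def eNorm {n : ℕ} (v : Fin n → ℝ) : ℝ := Real.sqrt (v ⬝ᵥ v)

/-- Layer maps of a feedforward neural network whose layer `i+1` applies the scalar
activation `φ i` componentwise: `w⁰(x) = x`,
`w^{i+1}(x)_j = φ i ((W i · w^i(x))_j + (b i)_j)`. -/
noncomputable def nnLayer (m : ℕ → ℕ)
    (W : (i : ℕ) → Matrix (Fin (m (i + 1))) (Fin (m i)) ℝ)
    (b : (i : ℕ) → Fin (m (i + 1)) → ℝ)
    (φ : ℕ → ℝ → ℝ) :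
    (i : ℕ) → (Fin (m 0) → ℝ) → Fin (m i) → ℝ
  | 0, x => x
  | i + 1, x => fun j => φ i ((W i).mulVec (nnLayer m W b φ i x) j + b i j)

lemma hasDerivAt_quadForm {n : ℕ} (P : Matrix (Fin n) (Fin n) ℝ)
    {f : ℝ → Fin n → ℝ} {f' : Fin n → ℝ} {t : ℝ} (hf : HasDerivAt f f' t) :
    HasDerivAt (fun s => f s ⬝ᵥ P.mulVec (f s))
      (f' ⬝ᵥ P.mulVec (f t) + f t ⬝ᵥ P.mulVec f') t := by
  have hcomp : ∀ j, HasDerivAt (fun s => f s j) (f' j) t := fun j => hasDerivAt_pi.mp hf j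
  have hfun : (fun s => f s ⬝ᵥ P.mulVec (f s))
      = fun s => ∑ j, ∑ l, f s j * (P j l * f s l) := by
    funext s
    simp [dotProduct, mulVec, Finset.mul_sum]
  rw [hfun]
  have h2 : HasDerivAt (fun s => ∑ j, ∑ l, f s j * (P j l * f s l))
      (∑ j, ∑ l, (f' j * (P j l * f t l) + f t j * (P j l * f' l))) t := by
    apply HasDerivAt.fun_sum
    intro j _
    apply HasDerivAt.fun_sum
    intro l _
    exact (hcomp j).mul ((hcomp l).const_mul (P j l))
  convert h2 using 1
  simp [dotProduct, mulVec, Finset.mul_sum, Finset.sum_add_distrib]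

lemma dot_symm {n : ℕ} {P : Matrix (Fin n) (Fin n) ℝ} (hPs : Pᵀ = P) (u w : Fin n → ℝ) :
    u ⬝ᵥ P.mulVec w = w ⬝ᵥ P.mulVec u := by
  conv_lhs => rw [← hPs]
  rw [mulVec_transpose, dotProduct_comm, ← dotProduct_mulVec]

lemma gronwall_exp {V V' : ℝ → ℝ} {γ : ℝ}
    (hd : ∀ t, 0 ≤ t → HasDerivAt V (V' t) t)
    (hle : ∀ t, 0 ≤ t → V' t ≤ -γ * V t) :
    ∀ t, 0 ≤ t → V t ≤ V 0 * Real.exp (-γ * t) := by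
  intro t ht
  set g : ℝ → ℝ := fun s => V s * Real.exp (γ * s) with hgdef
  have hgd : ∀ s, 0 ≤ s → HasDerivAt g
      (V' s * Real.exp (γ * s) + V s * (Real.exp (γ * s) * γ)) s := by
    intro s hs
    have he : HasDerivAt (fun s => Real.exp (γ * s)) (Real.exp (γ * s) * γ) s := by
      simpa using ((hasDerivAt_id s).const_mul γ).exp
    exact (hd s hs).mul he
  have hanti : AntitoneOn g (Set.Ici (0:ℝ)) := by
    apply antitoneOn_of_deriv_nonpos (convex_Ici 0)
    · intro s hs
      exact (hgd s hs).continuousAt.continuousWithinAt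
    · intro s hs
      rw [interior_Ici] at hs
      exact ((hgd s (le_of_lt hs)).differentiableAt).differentiableWithinAt
    · intro s hs
      rw [interior_Ici] at hs
      rw [(hgd s (le_of_lt hs)).deriv]
      have hE := Real.exp_pos (γ * s)
      have := hle s (le_of_lt hs)
      nlinarith
  have hg0 : g t ≤ g 0 := hanti (Set.self_mem_Ici) ht ht
  have hgt : V t * Real.exp (γ * t) ≤ V 0 := by
    simpa [hgdef] using hg0
  have hrw : V 0 * Real.exp (-γ * t) = V 0 / Real.exp (γ * t) := by
    rw [neg_mul, Real.exp_neg, div_eq_mul_inv]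
  rw [hrw, le_div_iff₀ (Real.exp_pos _)]
  exact hgt

/-- Theorem 3: contraction of the multilayer NODE system
`ẋ = A x + W^{k+1} wᵏ(x) + b^{k+1}` under the quadratic-form condition. -/
theorem multilayer_node_contractive
    (k : ℕ) (hk : 1 ≤ k) (m : ℕ → ℕ)
    (A : Matrix (Fin (m 0)) (Fin (m 0)) ℝ)
    (W : (i : ℕ) → Matrix (Fin (m (i + 1))) (Fin (m i)) ℝ)
    (b : (i : ℕ) → Fin (m (i + 1)) → ℝ)
    (Wk : Matrix (Fin (m 0)) (Fin (m k)) ℝ) (bk : Fin (m 0) → ℝ)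
    (φ : ℕ → ℝ → ℝ) (α β : ℕ → ℝ)
    (hsec : ∀ i, ∀ a c : ℝ,
      (φ i a - φ i c - α i * (a - c)) * (φ i a - φ i c - β i * (a - c)) ≤ 0)
    (P : Matrix (Fin (m 0)) (Fin (m 0)) ℝ) (hP : P.PosDef)
    (p₁ p₂ γ : ℝ) (hp₁ : 0 < p₁) (hp₁₂ : p₁ ≤ p₂) (hγ : 0 < γ)
    (hPlo : (P - p₁ • (1 : Matrix (Fin (m 0)) (Fin (m 0)) ℝ)).PosSemidef)
    (hPhi : (p₂ • (1 : Matrix (Fin (m 0)) (Fin (m 0)) ℝ) - P).PosSemidef)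
    (hQF : ∀ v : (i : ℕ) → Fin (m i) → ℝ,
      v 0 ⬝ᵥ (Aᵀ * P + P * A + γ • P).mulVec (v 0)
        + 2 * (v 0 ⬝ᵥ P.mulVec (Wk.mulVec (v k)))
        - 2 * ∑ i ∈ Finset.range k,
            (v (i + 1) - α i • (W i).mulVec (v i)) ⬝ᵥ
              (v (i + 1) - β i • (W i).mulVec (v i)) ≤ 0)
    (x₁ x₂ : ℝ → Fin (m 0) → ℝ)
    (hx₁ : ∀ t, 0 ≤ t → HasDerivAt x₁
      (A.mulVec (x₁ t) + (Wk.mulVec (nnLayer m W b φ k (x₁ t)) + bk)) t)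
    (hx₂ : ∀ t, 0 ≤ t → HasDerivAt x₂
      (A.mulVec (x₂ t) + (Wk.mulVec (nnLayer m W b φ k (x₂ t)) + bk)) t) :
    ∀ t, 0 ≤ t →
      eNorm (x₁ t - x₂ t) ≤
        Real.sqrt (p₂ / p₁) * Real.exp (-(γ / 2) * t) * eNorm (x₁ 0 - x₂ 0) := by
  have hPs : Pᵀ = P := by
    have h : Pᴴ = P := hP.1
    rwa [conjTranspose_eq_transpose_of_trivial] at h
  set Δ : ℝ → Fin (m 0) → ℝ := fun t => x₁ t - x₂ t with hΔdef
  set vk : ℝ → Fin (m k) → ℝ :=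
    fun t => nnLayer m W b φ k (x₁ t) - nnLayer m W b φ k (x₂ t) with hvkdef
  set D : ℝ → Fin (m 0) → ℝ := fun t => A.mulVec (Δ t) + Wk.mulVec (vk t) with hDdef
  set V : ℝ → ℝ := fun t => Δ t ⬝ᵥ P.mulVec (Δ t) with hVdef
  set V' : ℝ → ℝ := fun t => D t ⬝ᵥ P.mulVec (Δ t) + Δ t ⬝ᵥ P.mulVec (D t) with hV'def
  -- derivative of Δ
  have hΔd : ∀ t, 0 ≤ t → HasDerivAt Δ (D t) t := by
    intro t ht
    have h := (hx₁ t ht).sub (hx₂ t ht)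
    have heq : (A.mulVec (x₁ t) + (Wk.mulVec (nnLayer m W b φ k (x₁ t)) + bk))
        - (A.mulVec (x₂ t) + (Wk.mulVec (nnLayer m W b φ k (x₂ t)) + bk)) = D t := by
      simp only [hDdef, hΔdef, hvkdef, mulVec_sub]
      abel
    rw [← heq]
    exact h
  have hVd : ∀ t, 0 ≤ t → HasDerivAt V (V' t) t := by
    intro t ht
    exact hasDerivAt_quadForm P (hΔd t ht)
  -- key inequality
  have hkey : ∀ t, 0 ≤ t → V' t ≤ -γ * V t := by
    intro t ht
    set v : (i : ℕ) → Fin (m i) → ℝ :=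
      fun i => nnLayer m W b φ i (x₁ t) - nnLayer m W b φ i (x₂ t) with hvdef
    have hv0 : v 0 = Δ t := rfl
    have hvk : v k = vk t := rfl
    -- sector terms nonpositive
    have hS : ∀ i ∈ Finset.range k,
        (v (i + 1) - α i • (W i).mulVec (v i)) ⬝ᵥ
          (v (i + 1) - β i • (W i).mulVec (v i)) ≤ 0 := by
      intro i _
      rw [dotProduct]
      apply Finset.sum_nonpos
      intro j _
      have hWv : ((W i).mulVec (v i)) j
          = ((W i).mulVec (nnLayer m W b φ i (x₁ t)) j + b i j)
            - ((W i).mulVec (nnLayer m W b φ i (x₂ t)) j + b i j) := by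
        simp [hvdef, mulVec_sub]
      have hsec' := hsec i ((W i).mulVec (nnLayer m W b φ i (x₁ t)) j + b i j)
        ((W i).mulVec (nnLayer m W b φ i (x₂ t)) j + b i j)
      have hv1 : v (i + 1) j = φ i ((W i).mulVec (nnLayer m W b φ i (x₁ t)) j + b i j)
          - φ i ((W i).mulVec (nnLayer m W b φ i (x₂ t)) j + b i j) := by
        simp [hvdef, nnLayer]
      simp only [Pi.sub_apply, Pi.smul_apply, smul_eq_mul]
      rw [hv1, hWv]
      convert hsec' using 2 <;> ring
    have hSum : ∑ i ∈ Finset.range k,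
        (v (i + 1) - α i • (W i).mulVec (v i)) ⬝ᵥ
          (v (i + 1) - β i • (W i).mulVec (v i)) ≤ 0 := Finset.sum_nonpos hS
    have hQ := hQF v
    -- expand the quadratic form
    have hT1 : v 0 ⬝ᵥ (Aᵀ * P + P * A + γ • P).mulVec (v 0)
        = v 0 ⬝ᵥ (Aᵀ * P).mulVec (v 0) + v 0 ⬝ᵥ (P * A).mulVec (v 0)
          + γ * (v 0 ⬝ᵥ P.mulVec (v 0)) := by
      rw [add_mulVec, add_mulVec, dotProduct_add, dotProduct_add, smul_mulVec,
        dotProduct_smul, smul_eq_mul]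
    -- expand V'
    have h1 : (A.mulVec (Δ t)) ⬝ᵥ P.mulVec (Δ t) = Δ t ⬝ᵥ (Aᵀ * P).mulVec (Δ t) := by
      rw [← mulVec_mulVec, dotProduct_mulVec (Δ t) Aᵀ, vecMul_transpose]
    have h2 : (Wk.mulVec (vk t)) ⬝ᵥ P.mulVec (Δ t) = Δ t ⬝ᵥ P.mulVec (Wk.mulVec (vk t)) :=
      dot_symm hPs _ _
    have h3 : Δ t ⬝ᵥ P.mulVec (D t)
        = Δ t ⬝ᵥ (P * A).mulVec (Δ t) + Δ t ⬝ᵥ P.mulVec (Wk.mulVec (vk t)) := by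
      rw [hDdef]
      simp only [mulVec_add, dotProduct_add, mulVec_mulVec]
    have hV'eq : V' t = Δ t ⬝ᵥ (Aᵀ * P).mulVec (Δ t) + Δ t ⬝ᵥ (P * A).mulVec (Δ t)
        + 2 * (Δ t ⬝ᵥ P.mulVec (Wk.mulVec (vk t))) := by
      show D t ⬝ᵥ P.mulVec (Δ t) + Δ t ⬝ᵥ P.mulVec (D t) = _
      have hD : D t = A.mulVec (Δ t) + Wk.mulVec (vk t) := rfl
      rw [hD, add_dotProduct, h1, h2, mulVec_add, dotProduct_add]
      simp only [mulVec_mulVec]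
      ring
    have hVt : V t = Δ t ⬝ᵥ P.mulVec (Δ t) := rfl
    rw [hv0] at hQ hT1
    rw [hvk] at hQ
    rw [hT1] at hQ
    rw [hV'eq, hVt]
    linarith
  -- Gronwall
  have hVle := gronwall_exp hVd hkey
  -- norm bounds
  have hlo : ∀ u : Fin (m 0) → ℝ, p₁ * (u ⬝ᵥ u) ≤ u ⬝ᵥ P.mulVec u := by
    intro u
    have h := hPlo.dotProduct_mulVec_nonneg u
    simp only [star_trivial, sub_mulVec, dotProduct_sub, smul_mulVec, one_mulVec,
      dotProduct_smul, smul_eq_mul] at h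
    linarith
  have hhi : ∀ u : Fin (m 0) → ℝ, u ⬝ᵥ P.mulVec u ≤ p₂ * (u ⬝ᵥ u) := by
    intro u
    have h := hPhi.dotProduct_mulVec_nonneg u
    simp only [star_trivial, sub_mulVec, dotProduct_sub, smul_mulVec, one_mulVec,
      dotProduct_smul, smul_eq_mul] at h
    linarith
  intro t ht
  have h0 : (0:ℝ) ≤ Δ 0 ⬝ᵥ Δ 0 := by
    rw [dotProduct]
    exact Finset.sum_nonneg fun i _ => mul_self_nonneg _
  have h1' : p₁ * (Δ t ⬝ᵥ Δ t) ≤ V t := hlo (Δ t)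
  have h2' : V 0 ≤ p₂ * (Δ 0 ⬝ᵥ Δ 0) := hhi (Δ 0)
  have h3 := hVle t ht
  have hE := Real.exp_pos (-γ * t)
  have hp₂ : (0:ℝ) < p₂ := lt_of_lt_of_le hp₁ hp₁₂
  have hmain : Δ t ⬝ᵥ Δ t ≤ (p₂ / p₁) * Real.exp (-γ * t) * (Δ 0 ⬝ᵥ Δ 0) := by
    rw [div_mul_eq_mul_div, div_mul_eq_mul_div, le_div_iff₀ hp₁]
    have h4 : V 0 * Real.exp (-γ * t) ≤ p₂ * (Δ 0 ⬝ᵥ Δ 0) * Real.exp (-γ * t) :=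
      mul_le_mul_of_nonneg_right h2' hE.le
    nlinarith
  have hsqExp : Real.sqrt (Real.exp (-γ * t)) = Real.exp (-(γ / 2) * t) := by
    rw [show -γ * t = (-(γ / 2) * t) + (-(γ / 2) * t) by ring, Real.exp_add,
      Real.sqrt_mul_self (Real.exp_pos _).le]
  have hdivnn : (0:ℝ) ≤ p₂ / p₁ := div_nonneg hp₂.le hp₁.le
  show Real.sqrt (Δ t ⬝ᵥ Δ t) ≤
    Real.sqrt (p₂ / p₁) * Real.exp (-(γ / 2) * t) * Real.sqrt (Δ 0 ⬝ᵥ Δ 0)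
  calc Real.sqrt (Δ t ⬝ᵥ Δ t)
      ≤ Real.sqrt ((p₂ / p₁) * Real.exp (-γ * t) * (Δ 0 ⬝ᵥ Δ 0)) := Real.sqrt_le_sqrt hmain
    _ = Real.sqrt (p₂ / p₁) * Real.sqrt (Real.exp (-γ * t)) * Real.sqrt (Δ 0 ⬝ᵥ Δ 0) := by
        rw [Real.sqrt_mul (mul_nonneg hdivnn hE.le), Real.sqrt_mul hdivnn]
    _ = Real.sqrt (p₂ / p₁) * Real.exp (-(γ / 2) * t) * Real.sqrt (Δ 0 ⬝ᵥ Δ 0) := by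
        rw [hsqExp]
end

section
/- Consider the multilayer NODE system in which, for each layer i+1, the scalar activation φ^{i+1} is incrementally sector bounded by [α^{i+1}, β^{i+1}] on ℝ, and suppose there exist a symmetric positive definite P ∈ ℝ^{n×n} and γ > 0 such that for all v⁰ ∈ ℝⁿ and vⁱ ∈ ℝ^{mᵢ}, i = 1,…,k: ⟨v⁰, (AᵀP + PA + γP)·v⁰⟩ + 2·⟨v⁰, P·W^{k+1}·vᵏ⟩ − 2·Σ_{i=0}^{k−1} ⟨v^{i+1} − α^{i+1}·W^{i+1}·vⁱ, v^{i+1} − β^{i+1}·W^{i+1}·vⁱ⟩ ≤ 0. Then for any two solutions x₁, x₂ of the multilayer NODE system, the function V(t) = ⟨x₁(t) − x₂(t), P·(x₁(t) − x₂(t))⟩ is differentiable on [0,∞) and satisfies V′(t) ≤ −γ·V(t) for all t ≥ 0. -/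
open Matrix

/-- the Lyapunov function `V(t) = ⟨x₁(t) − x₂(t), P (x₁(t) − x₂(t))⟩` is
differentiable on `[0, ∞)` and satisfies `V′ ≤ −γ V` there. -/
theorem multilayer_node_lyapunov_decay
    (k : ℕ) (hk : 1 ≤ k) (m : ℕ → ℕ)
    (A : Matrix (Fin (m 0)) (Fin (m 0)) ℝ)
    (W : (i : ℕ) → Matrix (Fin (m (i + 1))) (Fin (m i)) ℝ)
    (b : (i : ℕ) → Fin (m (i + 1)) → ℝ)
    (Wk : Matrix (Fin (m 0)) (Fin (m k)) ℝ) (bk : Fin (m 0) → ℝ)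
    (φ : ℕ → ℝ → ℝ) (α β : ℕ → ℝ)
    (hsec : ∀ i, ∀ a c : ℝ,
      (φ i a - φ i c - α i * (a - c)) * (φ i a - φ i c - β i * (a - c)) ≤ 0)
    (P : Matrix (Fin (m 0)) (Fin (m 0)) ℝ) (hP : P.PosDef)
    (γ : ℝ) (hγ : 0 < γ)
    (hQF : ∀ v : (i : ℕ) → Fin (m i) → ℝ,
      v 0 ⬝ᵥ (Aᵀ * P + P * A + γ • P).mulVec (v 0)
        + 2 * (v 0 ⬝ᵥ P.mulVec (Wk.mulVec (v k)))
        - 2 * ∑ i ∈ Finset.range k,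
            (v (i + 1) - α i • (W i).mulVec (v i)) ⬝ᵥ
              (v (i + 1) - β i • (W i).mulVec (v i)) ≤ 0)
    (x₁ x₂ : ℝ → Fin (m 0) → ℝ)
    (hx₁ : ∀ t, 0 ≤ t → HasDerivAt x₁
      (A.mulVec (x₁ t) + (Wk.mulVec (nnLayer m W b φ k (x₁ t)) + bk)) t)
    (hx₂ : ∀ t, 0 ≤ t → HasDerivAt x₂
      (A.mulVec (x₂ t) + (Wk.mulVec (nnLayer m W b φ k (x₂ t)) + bk)) t) :
    ∃ V' : ℝ → ℝ,
      (∀ t, 0 ≤ t →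
        HasDerivAt (fun s => (x₁ s - x₂ s) ⬝ᵥ P.mulVec (x₁ s - x₂ s)) (V' t) t) ∧
      (∀ t, 0 ≤ t →
        V' t ≤ -γ * ((x₁ t - x₂ t) ⬝ᵥ P.mulVec (x₁ t - x₂ t))) := by
  classical
  set e : ℝ → Fin (m 0) → ℝ := fun s => x₁ s - x₂ s with he
  set v : ℝ → (i : ℕ) → Fin (m i) → ℝ :=
    fun s i => nnLayer m W b φ i (x₁ s) - nnLayer m W b φ i (x₂ s) with hv
  set d : ℝ → Fin (m 0) → ℝ := fun s => A.mulVec (e s) + Wk.mulVec (v s k) with hdd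
  have hd : ∀ t, 0 ≤ t → HasDerivAt e (d t) t := by
    intro t ht
    have h := (hx₁ t ht).sub (hx₂ t ht)
    convert h using 1
    case e'_9 =>
      simp only [hdd, hv, he, Matrix.mulVec_sub]
      abel
    all_goals rfl
  refine ⟨fun t => d t ⬝ᵥ P.mulVec (e t) + e t ⬝ᵥ P.mulVec (d t), ?_, ?_⟩
  · intro t ht
    have hcomp : ∀ j, HasDerivAt (fun s => e s j) (d t j) t :=
      fun j => hasDerivAt_pi.mp (hd t ht) j
    have hinner : ∀ j, HasDerivAt (fun s => P.mulVec (e s) j) (P.mulVec (d t) j) t := by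
      intro j
      simp only [Matrix.mulVec, dotProduct]
      exact HasDerivAt.fun_sum fun l _ => (hcomp l).const_mul (P j l)
    have hmain : HasDerivAt (fun s => e s ⬝ᵥ P.mulVec (e s))
        (∑ j, (d t j * P.mulVec (e t) j + e t j * P.mulVec (d t) j)) t := by
      simp only [dotProduct]
      exact HasDerivAt.fun_sum fun j _ => (hcomp j).mul (hinner j)
    have heq : (∑ j, (d t j * P.mulVec (e t) j + e t j * P.mulVec (d t) j))
        = d t ⬝ᵥ P.mulVec (e t) + e t ⬝ᵥ P.mulVec (d t) := by
      simp [dotProduct, Finset.sum_add_distrib]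
    rw [heq] at hmain
    exact hmain
  · intro t ht
    -- symmetry of P
    have hPsymm : Pᵀ = P := by
      have := hP.isHermitian
      simpa [Matrix.IsHermitian, Matrix.conjTranspose_eq_transpose_of_trivial] using this
    have hsym : d t ⬝ᵥ P.mulVec (e t) = e t ⬝ᵥ P.mulVec (d t) := by
      rw [Matrix.dotProduct_mulVec, dotProduct_comm, ← Matrix.mulVec_transpose, hPsymm]
    -- v t 0 = e t
    have hv0 : v t 0 = e t := rfl
    have hQ := hQF (v t)
    -- sector terms are nonpositive
    have hsum : ∀ i ∈ Finset.range k,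
        (v t (i + 1) - α i • (W i).mulVec (v t i)) ⬝ᵥ
          (v t (i + 1) - β i • (W i).mulVec (v t i)) ≤ 0 := by
      intro i _
      apply Finset.sum_nonpos
      intro j _
      have hW : (W i).mulVec (v t i) j
          = ((W i).mulVec (nnLayer m W b φ i (x₁ t)) j + b i j)
            - ((W i).mulVec (nnLayer m W b φ i (x₂ t)) j + b i j) := by
        simp [hv, Matrix.mulVec_sub]
      have hvj : v t (i + 1) j
          = φ i ((W i).mulVec (nnLayer m W b φ i (x₁ t)) j + b i j)
            - φ i ((W i).mulVec (nnLayer m W b φ i (x₂ t)) j + b i j) := by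
        simp [hv, nnLayer]
      have := hsec i ((W i).mulVec (nnLayer m W b φ i (x₁ t)) j + b i j)
        ((W i).mulVec (nnLayer m W b φ i (x₂ t)) j + b i j)
      simp only [Pi.sub_apply, Pi.smul_apply, smul_eq_mul]
      rw [hvj, hW]
      simpa using this
    have hsum' : (0:ℝ) ≤ - 2 * ∑ i ∈ Finset.range k,
        (v t (i + 1) - α i • (W i).mulVec (v t i)) ⬝ᵥ
          (v t (i + 1) - β i • (W i).mulVec (v t i)) := by
      have := Finset.sum_nonpos hsum
      nlinarith
    -- expand the quadratic form
    have h1 : e t ⬝ᵥ (Aᵀ * P) *ᵥ e t = A *ᵥ e t ⬝ᵥ P *ᵥ e t := by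
      rw [dotProduct_mulVec, dotProduct_mulVec, ← vecMul_vecMul, vecMul_transpose]
    have hexp : v t 0 ⬝ᵥ (Aᵀ * P + P * A + γ • P).mulVec (v t 0)
        = A.mulVec (e t) ⬝ᵥ P.mulVec (e t) + e t ⬝ᵥ P.mulVec (A.mulVec (e t))
          + γ * (e t ⬝ᵥ P.mulVec (e t)) := by
      rw [hv0]
      rw [Matrix.add_mulVec, Matrix.add_mulVec, dotProduct_add, dotProduct_add,
        h1, ← Matrix.mulVec_mulVec, Matrix.smul_mulVec, dotProduct_smul]
      simp
    have hderiveq : d t ⬝ᵥ P.mulVec (e t) + e t ⬝ᵥ P.mulVec (d t)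
        = A.mulVec (e t) ⬝ᵥ P.mulVec (e t) + e t ⬝ᵥ P.mulVec (A.mulVec (e t))
          + 2 * (e t ⬝ᵥ P.mulVec (Wk.mulVec (v t k))) := by
      have h1 : Wk.mulVec (v t k) ⬝ᵥ P.mulVec (e t)
          = e t ⬝ᵥ P.mulVec (Wk.mulVec (v t k)) := by
        rw [Matrix.dotProduct_mulVec, dotProduct_comm, ← Matrix.mulVec_transpose, hPsymm]
      simp only [hdd, add_dotProduct, Matrix.mulVec_add, dotProduct_add]
      rw [h1]; ring
    have hQ' := hQ
    rw [hexp] at hQ'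
    rw [hv0] at hQ'
    -- conclude
    have : d t ⬝ᵥ P.mulVec (e t) + e t ⬝ᵥ P.mulVec (d t)
        + γ * (e t ⬝ᵥ P.mulVec (e t)) ≤ 0 := by
      rw [hderiveq]
      nlinarith [Finset.sum_nonpos hsum]
    show d t ⬝ᵥ P.mulVec (e t) + e t ⬝ᵥ P.mulVec (d t) ≤ -γ * (e t ⬝ᵥ P.mulVec (e t))
    linarith [this]
end

section
/- Suppose the multilayer NODE system satisfies: each scalar activation φ^{i+1} is incrementally sector bounded by [α^{i+1}, β^{i+1}] on ℝ, and there exist a symmetric positive definite P ∈ ℝ^{n×n} and constants 0 < p̲ ≤ p̄, γ > 0 with p̲·I ⪯ P ⪯ p̄·I such that for all v⁰ ∈ ℝⁿ and vⁱ ∈ ℝ^{mᵢ}, i = 1,…,k: ⟨v⁰, (AᵀP + PA + γP)·v⁰⟩ + 2·⟨v⁰, P·W^{k+1}·vᵏ⟩ − 2·Σ_{i=0}^{k−1} ⟨v^{i+1} − α^{i+1}·W^{i+1}·vⁱ, v^{i+1} − β^{i+1}·W^{i+1}·vⁱ⟩ ≤ 0. Let e : ℝⁿ → ℝⁿ satisfy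 ‖e(y)‖ ≤ ε for all y ∈ ℝⁿ, let x : [0,∞) → ℝⁿ be differentiable with ẋ(t) = A·x(t) + Z(x(t)) + e(x(t)) for all t ≥ 0, and let x_nn be a solution of the multilayer NODE system. Then for all t ≥ 0: ‖x(t) − x_nn(t)‖ ≤ √(p̄/p̲)·‖x(0) − x_nn(0)‖·e^{−(γ/2)·t} + (2ε/γ)·√(p̄/p̲)·(1 − e^{−(γ/2)·t}). -/
open Matrix

/- ------------------ auxiliary lemmas ------------------ -/

lemma aux_hasDerivAt_dot {n : ℕ} {u v : ℝ → Fin n → ℝ} {u' v' : Fin n → ℝ} {t : ℝ}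
    (hu : HasDerivAt u u' t) (hv : HasDerivAt v v' t) :
    HasDerivAt (fun s => u s ⬝ᵥ v s) (u' ⬝ᵥ v t + u t ⬝ᵥ v') t := by
  have hu' := hasDerivAt_pi.mp hu
  have hv' := hasDerivAt_pi.mp hv
  have : HasDerivAt (fun s => ∑ i, u s i * v s i) (∑ i, (u' i * v t i + u t i * v' i)) t :=
    HasDerivAt.fun_sum fun i _ => (hu' i).mul (hv' i)
  simpa [dotProduct, Finset.sum_add_distrib] using this

lemma aux_hasDerivAt_mulVec {n p : ℕ} (M : Matrix (Fin p) (Fin n) ℝ) {u : ℝ → Fin n → ℝ}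
    {u' : Fin n → ℝ} {t : ℝ} (hu : HasDerivAt u u' t) :
    HasDerivAt (fun s => M.mulVec (u s)) (M.mulVec u') t := by
  have hu' := hasDerivAt_pi.mp hu
  refine hasDerivAt_pi.mpr fun i => ?_
  have : HasDerivAt (fun s => ∑ j, M i j * u s j) (∑ j, M i j * u' j) t :=
    HasDerivAt.fun_sum fun j _ => (hu' j).const_mul _
  simpa [Matrix.mulVec, dotProduct] using this

lemma aux_gronwall {u u' : ℝ → ℝ} {K E : ℝ} (hK : 0 < K)
    (hderiv : ∀ t, 0 ≤ t → HasDerivAt u (u' t) t)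
    (hbound : ∀ t, 0 ≤ t → u' t ≤ -K * u t + E) :
    ∀ t, 0 ≤ t → u t ≤ u 0 * Real.exp (-K*t) + (E/K) * (1 - Real.exp (-K*t)) := by
  set g : ℝ → ℝ := fun t => (u t - E/K) * Real.exp (K*t) with hg
  have hgderiv : ∀ t, 0 ≤ t → HasDerivAt g ((u' t + K * u t - E) * Real.exp (K*t)) t := by
    intro t ht
    have h1 : HasDerivAt (fun s => Real.exp (K*s)) (K * Real.exp (K*t)) t := by
      simpa [mul_comm, Function.comp_def] using (Real.hasDerivAt_exp (K*t)).comp t ((hasDerivAt_id t).const_mul K)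
    have := ((hderiv t ht).sub_const (E/K)).mul h1
    refine this.congr_deriv ?_
    field_simp
    ring
  have hanti : AntitoneOn g (Set.Ici (0:ℝ)) := by
    apply antitoneOn_of_deriv_nonpos (convex_Ici 0)
    · intro t ht
      exact ((hgderiv t ht).continuousAt).continuousWithinAt
    · intro t ht
      rw [interior_Ici] at ht
      exact (hgderiv t (le_of_lt ht)).differentiableAt.differentiableWithinAt
    · intro t ht
      rw [interior_Ici] at ht
      rw [(hgderiv t (le_of_lt ht)).deriv]
      have := hbound t (le_of_lt ht)
      have he : (0:ℝ) < Real.exp (K*t) := Real.exp_pos _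
      nlinarith
  intro t ht
  have := hanti (Set.self_mem_Ici) ht ht
  simp only [hg, mul_zero, Real.exp_zero, mul_one] at this
  have hexp : Real.exp (-K*t) = (Real.exp (K*t))⁻¹ := by
    rw [← Real.exp_neg]; ring_nf
  have hpos : (0:ℝ) < Real.exp (K*t) := Real.exp_pos _
  rw [hexp]
  have h2 : u t - E/K ≤ (u 0 - E/K) / Real.exp (K*t) := (le_div_iff₀ hpos).mpr this
  have h3 : (u 0 - E/K) / Real.exp (K*t)
      = u 0 * (Real.exp (K*t))⁻¹ - E/K*(Real.exp (K*t))⁻¹ := by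
    field_simp
  rw [h3] at h2
  linarith

lemma aux_cs {n : ℕ} (P : Matrix (Fin n) (Fin n) ℝ) (h : P.PosSemidef) (u v : Fin n → ℝ) :
    (u ⬝ᵥ P.mulVec v)^2 ≤ (u ⬝ᵥ P.mulVec u) * (v ⬝ᵥ P.mulVec v) := by
  have hPt : Pᵀ = P := by simpa using h.1.eq
  have hsym : ∀ a c : Fin n → ℝ, a ⬝ᵥ P.mulVec c = c ⬝ᵥ P.mulVec a := fun a c => by
    rw [Matrix.dotProduct_mulVec, ← hPt, Matrix.vecMul_transpose, dotProduct_comm, hPt]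
  have key : ∀ s : ℝ, 0 ≤ (v ⬝ᵥ P.mulVec v) * (s*s) + (2 * (u ⬝ᵥ P.mulVec v)) * s
      + (u ⬝ᵥ P.mulVec u) := by
    intro s
    have h0 := h.dotProduct_mulVec_nonneg (u + s • v)
    simp only [star_trivial] at h0
    have : (u + s • v) ⬝ᵥ P.mulVec (u + s • v)
        = (v ⬝ᵥ P.mulVec v) * (s*s) + (2 * (u ⬝ᵥ P.mulVec v)) * s + (u ⬝ᵥ P.mulVec u) := by
      rw [Matrix.mulVec_add, Matrix.mulVec_smul, add_dotProduct, smul_dotProduct,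
        dotProduct_add, dotProduct_add, dotProduct_smul,
        dotProduct_smul, hsym v u]
      simp [smul_eq_mul]; ring
    linarith [h0, this ▸ h0]
  have := discrim_le_zero key
  rw [discrim] at this
  nlinarith [this]

lemma aux_diss
    (k : ℕ) (m : ℕ → ℕ)
    (A : Matrix (Fin (m 0)) (Fin (m 0)) ℝ)
    (W : (i : ℕ) → Matrix (Fin (m (i + 1))) (Fin (m i)) ℝ)
    (b : (i : ℕ) → Fin (m (i + 1)) → ℝ)
    (Wk : Matrix (Fin (m 0)) (Fin (m k)) ℝ)
    (φ : ℕ → ℝ → ℝ) (α β : ℕ → ℝ)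
    (hsec : ∀ i, ∀ a c : ℝ,
      (φ i a - φ i c - α i * (a - c)) * (φ i a - φ i c - β i * (a - c)) ≤ 0)
    (P : Matrix (Fin (m 0)) (Fin (m 0)) ℝ) (hPt : Pᵀ = P) (γ : ℝ)
    (hQF : ∀ v : (i : ℕ) → Fin (m i) → ℝ,
      v 0 ⬝ᵥ (Aᵀ * P + P * A + γ • P).mulVec (v 0)
        + 2 * (v 0 ⬝ᵥ P.mulVec (Wk.mulVec (v k)))
        - 2 * ∑ i ∈ Finset.range k,
            (v (i + 1) - α i • (W i).mulVec (v i)) ⬝ᵥ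
              (v (i + 1) - β i • (W i).mulVec (v i)) ≤ 0)
    (y z : Fin (m 0) → ℝ) :
    2 * ((y - z) ⬝ᵥ P.mulVec (A.mulVec (y - z)
        + Wk.mulVec (nnLayer m W b φ k y - nnLayer m W b φ k z)))
      ≤ -γ * ((y - z) ⬝ᵥ P.mulVec (y - z)) := by
  have hsym : ∀ a c : Fin (m 0) → ℝ, a ⬝ᵥ P.mulVec c = c ⬝ᵥ P.mulVec a := fun a c => by
    rw [Matrix.dotProduct_mulVec, ← hPt, Matrix.vecMul_transpose, dotProduct_comm, hPt]
  set v : (i : ℕ) → Fin (m i) → ℝ :=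
    fun i => nnLayer m W b φ i y - nnLayer m W b φ i z with hv
  have hv0 : v 0 = y - z := rfl
  have hsum : ∀ i ∈ Finset.range k,
      (v (i + 1) - α i • (W i).mulVec (v i)) ⬝ᵥ
        (v (i + 1) - β i • (W i).mulVec (v i)) ≤ 0 := by
    intro i _
    apply Finset.sum_nonpos
    intro j _
    have ha : v (i + 1) j =
        φ i ((W i).mulVec (nnLayer m W b φ i y) j + b i j)
          - φ i ((W i).mulVec (nnLayer m W b φ i z) j + b i j) := rfl
    have hb : (W i).mulVec (v i) j =
        ((W i).mulVec (nnLayer m W b φ i y) j + b i j)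
          - ((W i).mulVec (nnLayer m W b φ i z) j + b i j) := by
      simp [hv, Matrix.mulVec_sub]
    simp only [Pi.sub_apply, Pi.smul_apply, smul_eq_mul, ha, hb]
    exact hsec i _ _
  have h0 := hQF v
  have hS : (0:ℝ) ≤ -2 * ∑ i ∈ Finset.range k,
      (v (i + 1) - α i • (W i).mulVec (v i)) ⬝ᵥ
        (v (i + 1) - β i • (W i).mulVec (v i)) := by
    have := Finset.sum_nonpos hsum
    linarith
  have hXY : v 0 ⬝ᵥ (Aᵀ * P + P * A + γ • P).mulVec (v 0)
      + 2 * (v 0 ⬝ᵥ P.mulVec (Wk.mulVec (v k))) ≤ 0 := by linarith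
  have hexp : v 0 ⬝ᵥ (Aᵀ * P + P * A + γ • P).mulVec (v 0)
      = 2 * (v 0 ⬝ᵥ P.mulVec (A.mulVec (v 0))) + γ * (v 0 ⬝ᵥ P.mulVec (v 0)) := by
    rw [Matrix.add_mulVec, Matrix.add_mulVec, dotProduct_add, dotProduct_add,
      ← Matrix.mulVec_mulVec, ← Matrix.mulVec_mulVec, Matrix.smul_mulVec,
      dotProduct_smul]
    have h1 : v 0 ⬝ᵥ Aᵀ.mulVec (P.mulVec (v 0)) = v 0 ⬝ᵥ P.mulVec (A.mulVec (v 0)) := by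
      rw [Matrix.dotProduct_mulVec, Matrix.vecMul_transpose, hsym]
    rw [h1]
    simp only [smul_eq_mul]
    ring
  rw [hv0] at hexp hXY
  have hadd : (y - z) ⬝ᵥ P.mulVec (A.mulVec (y - z)
      + Wk.mulVec (nnLayer m W b φ k y - nnLayer m W b φ k z))
      = (y - z) ⬝ᵥ P.mulVec (A.mulVec (y - z))
        + (y - z) ⬝ᵥ P.mulVec (Wk.mulVec (v k)) := by
    rw [Matrix.mulVec_add, dotProduct_add]
  rw [hadd]
  linarith

/-- Proposition 1: bound on the distance between a trajectory of the
perturbed system `ẋ = A x + Z(x) + e(x)` and a trajectory of the contractive multilayer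
NODE system. -/
theorem perturbed_vs_node_trajectory_bound
    (k : ℕ) (hk : 1 ≤ k) (m : ℕ → ℕ)
    (A : Matrix (Fin (m 0)) (Fin (m 0)) ℝ)
    (W : (i : ℕ) → Matrix (Fin (m (i + 1))) (Fin (m i)) ℝ)
    (b : (i : ℕ) → Fin (m (i + 1)) → ℝ)
    (Wk : Matrix (Fin (m 0)) (Fin (m k)) ℝ) (bk : Fin (m 0) → ℝ)
    (φ : ℕ → ℝ → ℝ) (α β : ℕ → ℝ)
    (hsec : ∀ i, ∀ a c : ℝ,
      (φ i a - φ i c - α i * (a - c)) * (φ i a - φ i c - β i * (a - c)) ≤ 0)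
    (P : Matrix (Fin (m 0)) (Fin (m 0)) ℝ) (hP : P.PosDef)
    (p₁ p₂ γ : ℝ) (hp₁ : 0 < p₁) (hp₁₂ : p₁ ≤ p₂) (hγ : 0 < γ)
    (hPlo : (P - p₁ • (1 : Matrix (Fin (m 0)) (Fin (m 0)) ℝ)).PosSemidef)
    (hPhi : (p₂ • (1 : Matrix (Fin (m 0)) (Fin (m 0)) ℝ) - P).PosSemidef)
    (hQF : ∀ v : (i : ℕ) → Fin (m i) → ℝ,
      v 0 ⬝ᵥ (Aᵀ * P + P * A + γ • P).mulVec (v 0)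
        + 2 * (v 0 ⬝ᵥ P.mulVec (Wk.mulVec (v k)))
        - 2 * ∑ i ∈ Finset.range k,
            (v (i + 1) - α i • (W i).mulVec (v i)) ⬝ᵥ
              (v (i + 1) - β i • (W i).mulVec (v i)) ≤ 0)
    (ε : ℝ) (e : (Fin (m 0) → ℝ) → Fin (m 0) → ℝ)
    (he : ∀ y, eNorm (e y) ≤ ε)
    (x xnn : ℝ → Fin (m 0) → ℝ)
    (hx : ∀ t, 0 ≤ t → HasDerivAt x
      (A.mulVec (x t) + (Wk.mulVec (nnLayer m W b φ k (x t)) + bk) + e (x t)) t)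
    (hxnn : ∀ t, 0 ≤ t → HasDerivAt xnn
      (A.mulVec (xnn t) + (Wk.mulVec (nnLayer m W b φ k (xnn t)) + bk)) t) :
    ∀ t, 0 ≤ t →
      eNorm (x t - xnn t) ≤
        Real.sqrt (p₂ / p₁) * eNorm (x 0 - xnn 0) * Real.exp (-(γ / 2) * t)
          + (2 * ε / γ) * Real.sqrt (p₂ / p₁) * (1 - Real.exp (-(γ / 2) * t)) := by
  have hp₂ : 0 < p₂ := lt_of_lt_of_le hp₁ hp₁₂
  have hε : 0 ≤ ε := le_trans (Real.sqrt_nonneg _) (he (x 0))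
  have hPt : Pᵀ = P := by simpa using hP.1.eq
  have hsym : ∀ a c : Fin (m 0) → ℝ, a ⬝ᵥ P.mulVec c = c ⬝ᵥ P.mulVec a := fun a c => by
    rw [Matrix.dotProduct_mulVec, ← hPt, Matrix.vecMul_transpose, dotProduct_comm, hPt]
  set d : ℝ → Fin (m 0) → ℝ := fun s => x s - xnn s with hd_def
  set Δ : ℝ → Fin (m k) → ℝ :=
    fun s => nnLayer m W b φ k (x s) - nnLayer m W b φ k (xnn s) with hΔ_def
  have hd : ∀ s, 0 ≤ s → HasDerivAt d (A.mulVec (d s) + Wk.mulVec (Δ s) + e (x s)) s := by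
    intro s hs
    have h := (hx s hs).sub (hxnn s hs)
    refine h.congr_deriv ?_
    simp only [hd_def, hΔ_def, Matrix.mulVec_sub]
    abel
  set Q : ℝ → ℝ := fun s => d s ⬝ᵥ P.mulVec (d s) with hQ_def
  have hQ0 : ∀ s, 0 ≤ Q s := fun s => by simpa using hP.posSemidef.dotProduct_mulVec_nonneg (d s)
  set Qd : ℝ → ℝ :=
    fun s => 2 * (d s ⬝ᵥ P.mulVec (A.mulVec (d s) + Wk.mulVec (Δ s) + e (x s))) with hQd_def
  have hQderiv : ∀ s, 0 ≤ s → HasDerivAt Q (Qd s) s := by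
    intro s hs
    have h := aux_hasDerivAt_dot (hd s hs) (aux_hasDerivAt_mulVec P (hd s hs))
    convert h using 1
    rw [hQd_def]
    simp only
    rw [two_mul, hsym]
  have hdiss : ∀ s, 2 * (d s ⬝ᵥ P.mulVec (A.mulVec (d s) + Wk.mulVec (Δ s))) ≤ -γ * Q s := by
    intro s
    have := aux_diss k m A W b Wk φ α β hsec P hPt γ hQF (x s) (xnn s)
    simpa [hd_def, hΔ_def, hQ_def] using this
  have hcross : ∀ s, d s ⬝ᵥ P.mulVec (e (x s)) ≤ Real.sqrt (Q s) * (Real.sqrt p₂ * ε) := by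
    intro s
    have hcs := aux_cs P hP.posSemidef (d s) (e (x s))
    have hePe : (e (x s)) ⬝ᵥ P.mulVec (e (x s)) ≤ p₂ * ((e (x s)) ⬝ᵥ (e (x s))) := by
      have h := hPhi.dotProduct_mulVec_nonneg (e (x s))
      simp only [star_trivial, Matrix.sub_mulVec, Matrix.smul_mulVec, Matrix.one_mulVec,
        dotProduct_sub, dotProduct_smul, smul_eq_mul] at h
      linarith
    have h2 : 0 ≤ (e (x s)) ⬝ᵥ (e (x s)) :=
      Finset.sum_nonneg fun i _ => mul_self_nonneg _
    have hee : (e (x s)) ⬝ᵥ (e (x s)) ≤ ε ^ 2 := by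
      have h1 := he (x s)
      unfold eNorm at h1
      nlinarith [Real.sq_sqrt h2, Real.sqrt_nonneg ((e (x s)) ⬝ᵥ (e (x s)))]
    have hb : (d s ⬝ᵥ P.mulVec (e (x s)))^2 ≤ Q s * (p₂ * ε^2) := by
      have hmono : (e (x s)) ⬝ᵥ P.mulVec (e (x s)) ≤ p₂ * ε^2 := by nlinarith
      calc (d s ⬝ᵥ P.mulVec (e (x s)))^2
          ≤ (d s ⬝ᵥ P.mulVec (d s)) * ((e (x s)) ⬝ᵥ P.mulVec (e (x s))) := hcs
        _ ≤ Q s * (p₂ * ε^2) := by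
            have hq := hQ0 s
            have hq' : (0:ℝ) ≤ (e (x s)) ⬝ᵥ P.mulVec (e (x s)) := by
              simpa using hP.posSemidef.dotProduct_mulVec_nonneg (e (x s))
            rw [hQ_def]
            simp only
            nlinarith
    calc d s ⬝ᵥ P.mulVec (e (x s)) ≤ |d s ⬝ᵥ P.mulVec (e (x s))| := le_abs_self _
      _ = Real.sqrt ((d s ⬝ᵥ P.mulVec (e (x s)))^2) := (Real.sqrt_sq_eq_abs _).symm
      _ ≤ Real.sqrt (Q s * (p₂ * ε^2)) := Real.sqrt_le_sqrt hb
      _ = Real.sqrt (Q s) * (Real.sqrt p₂ * ε) := by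
          rw [Real.sqrt_mul (hQ0 s), Real.sqrt_mul hp₂.le, Real.sqrt_sq hε]
  have hQd_le : ∀ s, 0 ≤ s →
      Qd s ≤ -γ * Q s + 2 * Real.sqrt (Q s) * (Real.sqrt p₂ * ε) := by
    intro s hs
    have h1 := hdiss s
    have h2 := hcross s
    have hsplit : d s ⬝ᵥ P.mulVec (A.mulVec (d s) + Wk.mulVec (Δ s) + e (x s))
        = d s ⬝ᵥ P.mulVec (A.mulVec (d s) + Wk.mulVec (Δ s)) + d s ⬝ᵥ P.mulVec (e (x s)) := by
      rw [Matrix.mulVec_add, dotProduct_add]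
    rw [hQd_def]
    simp only
    rw [hsplit]
    linarith
  have key : ∀ c : ℝ, 0 < c → ∀ t, 0 ≤ t →
      Real.sqrt (Q t + c) ≤ Real.sqrt (Q 0 + c) * Real.exp (-(γ/2)*t)
        + ((Real.sqrt p₂ * ε + (γ/2) * Real.sqrt c)/(γ/2)) * (1 - Real.exp (-(γ/2)*t)) := by
    intro c hc
    have hQc : ∀ s, 0 < Q s + c := fun s => by linarith [hQ0 s]
    have hud : ∀ s, 0 ≤ s → HasDerivAt (fun r => Real.sqrt (Q r + c))
        (Qd s / (2 * Real.sqrt (Q s + c))) s := by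
      intro s hs
      have h1 : HasDerivAt (fun r => Q r + c) (Qd s) s := (hQderiv s hs).add_const c
      have h2 := (Real.hasDerivAt_sqrt (ne_of_gt (hQc s))).comp s h1
      refine h2.congr_deriv ?_
      field_simp
    have hub : ∀ s, 0 ≤ s → Qd s / (2 * Real.sqrt (Q s + c))
        ≤ -(γ/2) * Real.sqrt (Q s + c) + (Real.sqrt p₂ * ε + (γ/2)*Real.sqrt c) := by
      intro s hs
      have h1 := hQd_le s hs
      have hr : 0 < Real.sqrt (Q s + c) := Real.sqrt_pos.mpr (hQc s)
      have hr2 : Real.sqrt (Q s + c) ^ 2 = Q s + c := Real.sq_sqrt (hQc s).le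
      have hq_le : Real.sqrt (Q s) ≤ Real.sqrt (Q s + c) := Real.sqrt_le_sqrt (by linarith)
      have hc_le : Real.sqrt c ≤ Real.sqrt (Q s + c) := Real.sqrt_le_sqrt (by linarith [hQ0 s])
      have hcc : Real.sqrt c * Real.sqrt c = c := Real.mul_self_sqrt hc.le
      have hq0 : (0:ℝ) ≤ Real.sqrt (Q s) := Real.sqrt_nonneg _
      have hsp : (0:ℝ) ≤ Real.sqrt p₂ := Real.sqrt_nonneg _
      rw [div_le_iff₀ (by positivity)]
      have hc0 : (0:ℝ) ≤ Real.sqrt c := Real.sqrt_nonneg _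
      have e1 : c ≤ Real.sqrt c * Real.sqrt (Q s + c) := by nlinarith [mul_le_mul_of_nonneg_left hc_le hc0]
      have e2 : Real.sqrt (Q s) * (Real.sqrt p₂ * ε)
          ≤ Real.sqrt (Q s + c) * (Real.sqrt p₂ * ε) :=
        mul_le_mul_of_nonneg_right hq_le (by positivity)
      nlinarith [h1, hr2]
    exact aux_gronwall (by linarith : (0:ℝ) < γ/2) hud hub
  intro t ht
  have hex1 : Real.exp (-(γ/2)*t) ≤ 1 := by
    rw [Real.exp_le_one_iff]
    nlinarith
  have hex0 : (0:ℝ) < Real.exp (-(γ/2)*t) := Real.exp_pos _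
  have hxlim : Real.sqrt (Q t) ≤ Real.sqrt (Q 0) * Real.exp (-(γ/2)*t)
      + ((Real.sqrt p₂ * ε)/(γ/2)) * (1 - Real.exp (-(γ/2)*t)) := by
    set ex := Real.exp (-(γ/2)*t) with hex
    set F : ℝ → ℝ := fun c => Real.sqrt (Q 0 + c) * ex
        + ((Real.sqrt p₂ * ε + (γ/2) * Real.sqrt c)/(γ/2)) * (1 - ex)
        - Real.sqrt (Q t + c) with hF
    have hcont : ContinuousAt F 0 := by
      apply ContinuousAt.sub
      apply ContinuousAt.add
      · exact ((Real.continuous_sqrt.comp (continuous_const.add continuous_id)).continuousAt).mul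
          continuousAt_const
      · exact ((((continuousAt_const.add
          (Real.continuous_sqrt.continuousAt.const_mul _))).div_const _).mul continuousAt_const)
      · exact (Real.continuous_sqrt.comp (continuous_const.add continuous_id)).continuousAt
    have hT : Filter.Tendsto F (nhdsWithin 0 (Set.Ioi 0))
        (nhds (Real.sqrt (Q 0) * ex + ((Real.sqrt p₂ * ε)/(γ/2)) * (1 - ex) - Real.sqrt (Q t))) := by
      have h : Filter.Tendsto F (nhdsWithin 0 (Set.Ioi (0:ℝ))) (nhds (F 0)) :=
        hcont.tendsto.mono_left nhdsWithin_le_nhds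
      have hF0 : F 0 = Real.sqrt (Q 0) * ex + ((Real.sqrt p₂ * ε)/(γ/2)) * (1 - ex)
          - Real.sqrt (Q t) := by
        simp [hF]
      rwa [hF0] at h
    have hge : 0 ≤ Real.sqrt (Q 0) * ex + ((Real.sqrt p₂ * ε)/(γ/2)) * (1 - ex)
        - Real.sqrt (Q t) := by
      refine ge_of_tendsto hT ?_
      filter_upwards [self_mem_nhdsWithin] with c hc
      have := key c hc t ht
      simp only [hF]
      linarith
    linarith
  -- relate Q with Euclidean norms
  have hlow : Real.sqrt p₁ * Real.sqrt (d t ⬝ᵥ d t) ≤ Real.sqrt (Q t) := by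
    have h := hPlo.dotProduct_mulVec_nonneg (d t)
    simp only [star_trivial, Matrix.sub_mulVec, Matrix.smul_mulVec, Matrix.one_mulVec,
      dotProduct_sub, dotProduct_smul, smul_eq_mul] at h
    rw [← Real.sqrt_mul hp₁.le]
    apply Real.sqrt_le_sqrt
    rw [hQ_def]
    simp only
    linarith
  have hhigh : Real.sqrt (Q 0) ≤ Real.sqrt p₂ * Real.sqrt (d 0 ⬝ᵥ d 0) := by
    have h := hPhi.dotProduct_mulVec_nonneg (d 0)
    simp only [star_trivial, Matrix.sub_mulVec, Matrix.smul_mulVec, Matrix.one_mulVec,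
      dotProduct_sub, dotProduct_smul, smul_eq_mul] at h
    rw [← Real.sqrt_mul hp₂.le]
    apply Real.sqrt_le_sqrt
    rw [hQ_def]
    simp only
    linarith
  have hsp1 : 0 < Real.sqrt p₁ := Real.sqrt_pos.mpr hp₁
  have hratio : Real.sqrt (p₂/p₁) = Real.sqrt p₂ / Real.sqrt p₁ := Real.sqrt_div hp₂.le p₁
  have heN : eNorm (x t - xnn t) = Real.sqrt (d t ⬝ᵥ d t) := rfl
  have heN0 : eNorm (x 0 - xnn 0) = Real.sqrt (d 0 ⬝ᵥ d 0) := rfl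
  rw [heN, heN0, hratio]
  have hd0 : (0:ℝ) ≤ Real.sqrt (d 0 ⬝ᵥ d 0) := Real.sqrt_nonneg _
  have hQtle : Real.sqrt (Q t) ≤ Real.sqrt p₂ * Real.sqrt (d 0 ⬝ᵥ d 0) * Real.exp (-(γ/2)*t)
      + ((Real.sqrt p₂ * ε)/(γ/2)) * (1 - Real.exp (-(γ/2)*t)) := by
    have h2 : Real.sqrt (Q 0) * Real.exp (-(γ/2)*t)
        ≤ Real.sqrt p₂ * Real.sqrt (d 0 ⬝ᵥ d 0) * Real.exp (-(γ/2)*t) :=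
      mul_le_mul_of_nonneg_right hhigh hex0.le
    linarith
  have hmain : Real.sqrt (d t ⬝ᵥ d t)
      ≤ (Real.sqrt p₂ * Real.sqrt (d 0 ⬝ᵥ d 0) * Real.exp (-(γ/2)*t)
        + ((Real.sqrt p₂ * ε)/(γ/2)) * (1 - Real.exp (-(γ/2)*t))) / Real.sqrt p₁ := by
    rw [le_div_iff₀ hsp1]
    calc Real.sqrt (d t ⬝ᵥ d t) * Real.sqrt p₁
        = Real.sqrt p₁ * Real.sqrt (d t ⬝ᵥ d t) := by ring
      _ ≤ Real.sqrt (Q t) := hlow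
      _ ≤ _ := hQtle
  calc Real.sqrt (d t ⬝ᵥ d t)
      ≤ (Real.sqrt p₂ * Real.sqrt (d 0 ⬝ᵥ d 0) * Real.exp (-(γ/2)*t)
        + ((Real.sqrt p₂ * ε)/(γ/2)) * (1 - Real.exp (-(γ/2)*t))) / Real.sqrt p₁ := hmain
    _ = Real.sqrt p₂ / Real.sqrt p₁ * Real.sqrt (d 0 ⬝ᵥ d 0) * Real.exp (-(γ / 2) * t)
        + 2 * ε / γ * (Real.sqrt p₂ / Real.sqrt p₁) * (1 - Real.exp (-(γ / 2) * t)) := by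
        field_simp
end

section
/- Consider layer widths m₀ = n, m₁, …, mₖ (k ≥ 1), weights W^{i+1} ∈ ℝ^{m_{i+1}×m_i} for i = 0,…,k−1, biases b^{i+1} ∈ ℝ^{m_{i+1}}, scalar activations φ^{i+1} incrementally sector bounded by [α^{i+1}, β^{i+1}] on ℝ applied componentwise as Φ^{i+1}, layer maps w⁰(x) = x and w^{i+1}(x) = Φ^{i+1}(W^{i+1}·w^{i}(x) + b^{i+1}), and matrices A ∈ ℝ^{n×n}, g ∈ ℝ^{n×l}, H ∈ ℝ^{l×n}, W_min ∈ ℝ^{n×mₖ}, c ∈ ℝⁿ. Suppose there exist a symmetric positive definite P ∈ ℝ^{n×n} and constants 0 < p̲ ≤ p̄, γ > 0 with p̲·I ⪯ P ⪯ p̄·I such that for all v⁰ ∈ ℝⁿ and vⁱ ∈ ℝ^{mᵢ}, i = 1,…,k: ⟨v⁰, ((A+gH)ᵀP + P(A+gH) + γP)·v⁰⟩ + 2·⟨v⁰, P·W_min·vᵏ⟩ − 2·Σ_{i=0}^{k−1} ⟨v^{i+1} − α^{i+1}·W^{i+1}·vⁱ, v^{i+1} − β^{i+1}·W^{i+1}·vⁱ⟩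 ≤ 0. Then any two differentiable functions x₁, x₂ : [0,∞) → ℝⁿ satisfying ẋ(t) = (A + gH)·x(t) + W_min·wᵏ(x(t)) + c for all t ≥ 0 satisfy ‖x₁(t) − x₂(t)‖ ≤ √(p̄/p̲)·e^{−(γ/2)·t}·‖x₁(0) − x₂(0)‖ for all t ≥ 0. -/
open Matrix

private lemma hasDerivAt_dotProduct_aux {n : ℕ} {f g : ℝ → Fin n → ℝ} {f' g' : Fin n → ℝ} {t : ℝ}
    (hf : HasDerivAt f f' t) (hg : HasDerivAt g g' t) :
    HasDerivAt (fun s => f s ⬝ᵥ g s) (f' ⬝ᵥ g t + f t ⬝ᵥ g') t := by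
  have h : HasDerivAt (fun s => ∑ i, f s i * g s i) (∑ i, (f' i * g t i + f t i * g' i)) t :=
    HasDerivAt.fun_sum (fun i _ => ((hasDerivAt_pi.mp hf i).mul (hasDerivAt_pi.mp hg i)))
  simpa [dotProduct, Finset.sum_add_distrib] using h

private lemma symm_dot_aux {n : ℕ} {P : Matrix (Fin n) (Fin n) ℝ} (h : Pᵀ = P) (u w : Fin n → ℝ) :
    u ⬝ᵥ P *ᵥ w = w ⬝ᵥ P *ᵥ u := by
  rw [dotProduct_mulVec, ← mulVec_transpose, h, dotProduct_comm]

/-- Theorem 6: contraction of the controlled multilayer system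
`ẋ = (A + gH) x + W_min wᵏ(x) + c` under the quadratic-form condition. -/
theorem controlled_multilayer_contractive
    (k : ℕ) (hk : 1 ≤ k) (m : ℕ → ℕ) (l : ℕ)
    (A : Matrix (Fin (m 0)) (Fin (m 0)) ℝ)
    (g : Matrix (Fin (m 0)) (Fin l) ℝ) (H : Matrix (Fin l) (Fin (m 0)) ℝ)
    (W : (i : ℕ) → Matrix (Fin (m (i + 1))) (Fin (m i)) ℝ)
    (b : (i : ℕ) → Fin (m (i + 1)) → ℝ)
    (Wmin : Matrix (Fin (m 0)) (Fin (m k)) ℝ) (c : Fin (m 0) → ℝ)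
    (φ : ℕ → ℝ → ℝ) (α β : ℕ → ℝ)
    (hsec : ∀ i, ∀ a d : ℝ,
      (φ i a - φ i d - α i * (a - d)) * (φ i a - φ i d - β i * (a - d)) ≤ 0)
    (P : Matrix (Fin (m 0)) (Fin (m 0)) ℝ) (hP : P.PosDef)
    (p₁ p₂ γ : ℝ) (hp₁ : 0 < p₁) (hp₁₂ : p₁ ≤ p₂) (hγ : 0 < γ)
    (hPlo : (P - p₁ • (1 : Matrix (Fin (m 0)) (Fin (m 0)) ℝ)).PosSemidef)
    (hPhi : (p₂ • (1 : Matrix (Fin (m 0)) (Fin (m 0)) ℝ) - P).PosSemidef)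
    (hQF : ∀ v : (i : ℕ) → Fin (m i) → ℝ,
      v 0 ⬝ᵥ ((A + g * H)ᵀ * P + P * (A + g * H) + γ • P).mulVec (v 0)
        + 2 * (v 0 ⬝ᵥ P.mulVec (Wmin.mulVec (v k)))
        - 2 * ∑ i ∈ Finset.range k,
            (v (i + 1) - α i • (W i).mulVec (v i)) ⬝ᵥ
              (v (i + 1) - β i • (W i).mulVec (v i)) ≤ 0)
    (x₁ x₂ : ℝ → Fin (m 0) → ℝ)
    (hx₁ : ∀ t, 0 ≤ t → HasDerivAt x₁
      ((A + g * H).mulVec (x₁ t) + Wmin.mulVec (nnLayer m W b φ k (x₁ t)) + c) t)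
    (hx₂ : ∀ t, 0 ≤ t → HasDerivAt x₂
      ((A + g * H).mulVec (x₂ t) + Wmin.mulVec (nnLayer m W b φ k (x₂ t)) + c) t) :
    ∀ t, 0 ≤ t →
      eNorm (x₁ t - x₂ t) ≤
        Real.sqrt (p₂ / p₁) * Real.exp (-(γ / 2) * t) * eNorm (x₁ 0 - x₂ 0) := by
  have hsym : Pᵀ = P := by
    have h : P.IsSymm := by simpa using hP.isHermitian
    exact h
  set M : Matrix (Fin (m 0)) (Fin (m 0)) ℝ := A + g * H with hMdef
  -- the error vector and incremental layer signals
  set e : ℝ → Fin (m 0) → ℝ := fun t => x₁ t - x₂ t with hedef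
  set v : ℝ → (i : ℕ) → Fin (m i) → ℝ :=
    fun t i => nnLayer m W b φ i (x₁ t) - nnLayer m W b φ i (x₂ t) with hvdef
  have hv0 : ∀ t, v t 0 = e t := fun t => rfl
  -- the Lyapunov function
  set V : ℝ → ℝ := fun t => e t ⬝ᵥ P *ᵥ e t with hVdef
  -- the derivative of e
  have hde : ∀ t, 0 ≤ t →
      HasDerivAt e (M.mulVec (e t) + Wmin.mulVec (v t k)) t := by
    intro t ht
    have h := (hx₁ t ht).sub (hx₂ t ht)
    refine h.congr_deriv ?_
    funext i
    simp [hedef, hvdef, mulVec_sub]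
    ring
  -- the derivative of V
  have hdV : ∀ t, 0 ≤ t →
      HasDerivAt V (2 * (e t ⬝ᵥ P *ᵥ (M.mulVec (e t) + Wmin.mulVec (v t k)))) t := by
    intro t ht
    have hPe : HasDerivAt (fun s => P *ᵥ e s)
        (P *ᵥ (M.mulVec (e t) + Wmin.mulVec (v t k))) t := by
      rw [hasDerivAt_pi]
      intro i
      simp only [mulVec, dotProduct]
      exact HasDerivAt.fun_sum fun j _ =>
        (hasDerivAt_pi.mp (hde t ht) j).const_mul (P i j)
    have h := hasDerivAt_dotProduct_aux (hde t ht) hPe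
    convert h using 1
    rw [symm_dot_aux hsym]
    ring
  -- key inequality : V' + γ V ≤ 0
  have hkey : ∀ t, 0 ≤ t →
      2 * (e t ⬝ᵥ P *ᵥ (M.mulVec (e t) + Wmin.mulVec (v t k))) + γ * V t ≤ 0 := by
    intro t ht
    have hsum : ∀ i ∈ Finset.range k,
        (v t (i + 1) - α i • (W i).mulVec (v t i)) ⬝ᵥ
          (v t (i + 1) - β i • (W i).mulVec (v t i)) ≤ 0 := by
      intro i _
      rw [dotProduct]
      apply Finset.sum_nonpos
      intro j _
      have h := hsec i ((W i).mulVec (nnLayer m W b φ i (x₁ t)) j + b i j)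
        ((W i).mulVec (nnLayer m W b φ i (x₂ t)) j + b i j)
      have hv1 : v t (i + 1) j =
          φ i ((W i).mulVec (nnLayer m W b φ i (x₁ t)) j + b i j)
          - φ i ((W i).mulVec (nnLayer m W b φ i (x₂ t)) j + b i j) := by
        simp [hvdef, nnLayer]
      have hv2 : ((W i).mulVec (v t i)) j =
          (W i).mulVec (nnLayer m W b φ i (x₁ t)) j
          - (W i).mulVec (nnLayer m W b φ i (x₂ t)) j := by
        simp [hvdef, mulVec_sub]
      simp only [Pi.sub_apply, Pi.smul_apply, smul_eq_mul, hv1, hv2]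
      convert h using 2
      · rfl
      all_goals ring
    have hq := hQF (v t)
    rw [hv0 t] at hq
    have hq' : e t ⬝ᵥ (Mᵀ * P + P * M + γ • P).mulVec (e t)
        + 2 * (e t ⬝ᵥ P.mulVec (Wmin.mulVec (v t k))) ≤ 0 := by
      have h2 : (0 : ℝ) ≤ - 2 * ∑ i ∈ Finset.range k,
          (v t (i + 1) - α i • (W i).mulVec (v t i)) ⬝ᵥ
            (v t (i + 1) - β i • (W i).mulVec (v t i)) := by
        have := Finset.sum_nonpos hsum
        nlinarith
      nlinarith [hq]
    -- expand the quadratic form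
    have hexp : e t ⬝ᵥ (Mᵀ * P + P * M + γ • P).mulVec (e t)
        = 2 * (e t ⬝ᵥ P *ᵥ (M.mulVec (e t))) + γ * V t := by
      rw [add_mulVec, add_mulVec, dotProduct_add, dotProduct_add]
      have h1 : e t ⬝ᵥ (Mᵀ * P).mulVec (e t) = e t ⬝ᵥ P *ᵥ (M.mulVec (e t)) := by
        rw [← mulVec_mulVec, dotProduct_mulVec, ← mulVec_transpose, transpose_transpose,
          symm_dot_aux hsym]
      have h2 : e t ⬝ᵥ (P * M).mulVec (e t) = e t ⬝ᵥ P *ᵥ (M.mulVec (e t)) := by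
        rw [← mulVec_mulVec]
      have h3 : e t ⬝ᵥ (γ • P).mulVec (e t) = γ * V t := by
        rw [smul_mulVec, dotProduct_smul, smul_eq_mul, hVdef]
      rw [h1, h2, h3]; ring
    have hsplit : e t ⬝ᵥ P *ᵥ (M.mulVec (e t) + Wmin.mulVec (v t k))
        = e t ⬝ᵥ P *ᵥ (M.mulVec (e t)) + e t ⬝ᵥ P.mulVec (Wmin.mulVec (v t k)) := by
      rw [mulVec_add, dotProduct_add]
    rw [hsplit]
    rw [hexp] at hq'
    linarith
  -- the function V t * exp (γ t) is antitone on [0, ∞)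
  set F : ℝ → ℝ := fun t => V t * Real.exp (γ * t) with hFdef
  have hdF : ∀ t, 0 ≤ t → HasDerivAt F
      ((2 * (e t ⬝ᵥ P *ᵥ (M.mulVec (e t) + Wmin.mulVec (v t k))) + γ * V t)
        * Real.exp (γ * t)) t := by
    intro t ht
    have hexp : HasDerivAt (fun s => Real.exp (γ * s)) (Real.exp (γ * t) * γ) t := by
      simpa using (((hasDerivAt_id t).const_mul γ).exp)
    have := (hdV t ht).mul hexp
    exact this.congr_deriv (by ring)
  have hanti : AntitoneOn F (Set.Ici (0 : ℝ)) := by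
    apply antitoneOn_of_deriv_nonpos (convex_Ici 0)
    · intro t ht
      exact (hdF t ht).continuousAt.continuousWithinAt
    · intro t ht
      rw [interior_Ici] at ht
      exact (hdF t ht.le).differentiableAt.differentiableWithinAt
    · intro t ht
      rw [interior_Ici] at ht
      rw [(hdF t ht.le).deriv]
      exact mul_nonpos_of_nonpos_of_nonneg (hkey t ht.le) (Real.exp_nonneg _)
  -- bounds on V via P
  have hlo : ∀ t, p₁ * (e t ⬝ᵥ e t) ≤ V t := by
    intro t
    have h := hPlo.dotProduct_mulVec_nonneg (e t)
    simp only [star_trivial, sub_mulVec, smul_mulVec, one_mulVec, dotProduct_sub,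
      dotProduct_smul, smul_eq_mul] at h
    linarith
  have hhi : V 0 ≤ p₂ * (e 0 ⬝ᵥ e 0) := by
    have h := hPhi.dotProduct_mulVec_nonneg (e 0)
    simp only [star_trivial, sub_mulVec, smul_mulVec, one_mulVec, dotProduct_sub,
      dotProduct_smul, smul_eq_mul] at h
    linarith
  -- conclude
  intro t ht
  have hFle : F t ≤ F 0 := hanti (Set.self_mem_Ici) ht ht
  have hVt : V t ≤ V 0 * Real.exp (-γ * t) := by
    have hpos : (0 : ℝ) < Real.exp (γ * t) := Real.exp_pos _
    have : V t * Real.exp (γ * t) ≤ V 0 := by simpa [hFdef] using hFle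
    rw [neg_mul, Real.exp_neg, ← div_eq_mul_inv, le_div_iff₀ hpos]
    exact this
  have hq0 : (0:ℝ) ≤ e 0 ⬝ᵥ e 0 := Finset.sum_nonneg fun i _ => mul_self_nonneg _
  have hexpsq : Real.exp (-γ * t) = (Real.exp (-(γ / 2) * t)) ^ 2 := by
    rw [sq, ← Real.exp_add]; ring_nf
  have hq : e t ⬝ᵥ e t ≤ (p₂ / p₁) * ((Real.exp (-(γ / 2) * t)) ^ 2 * (e 0 ⬝ᵥ e 0)) := by
    rw [← hexpsq]
    have h1 : V 0 * Real.exp (-γ * t) ≤ p₂ * (e 0 ⬝ᵥ e 0) * Real.exp (-γ * t) :=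
      mul_le_mul_of_nonneg_right hhi (Real.exp_nonneg _)
    have h2 : p₁ * (e t ⬝ᵥ e t) ≤ p₂ * (e 0 ⬝ᵥ e 0) * Real.exp (-γ * t) := by
      linarith [hlo t, hVt]
    rw [div_mul_eq_mul_div, le_div_iff₀ hp₁]
    nlinarith [h2]
  have hfin : Real.sqrt (e t ⬝ᵥ e t) ≤
      Real.sqrt (p₂ / p₁) * Real.exp (-(γ / 2) * t) * Real.sqrt (e 0 ⬝ᵥ e 0) := by
    calc Real.sqrt (e t ⬝ᵥ e t)
        ≤ Real.sqrt ((p₂ / p₁) * ((Real.exp (-(γ / 2) * t)) ^ 2 * (e 0 ⬝ᵥ e 0))) :=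
          Real.sqrt_le_sqrt hq
      _ = Real.sqrt (p₂ / p₁) * Real.exp (-(γ / 2) * t) * Real.sqrt (e 0 ⬝ᵥ e 0) := by
          rw [Real.sqrt_mul (div_nonneg (le_trans hp₁.le hp₁₂) hp₁.le), Real.sqrt_mul (sq_nonneg _),
            Real.sqrt_sq (Real.exp_nonneg _), mul_assoc]
  exact hfin
end

section
/- Consider layer widths m₀ = n, m₁, …, mₖ (k ≥ 2), weights W^{i+1} ∈ ℝ^{m_{i+1}×m_i} for i = 0,…,k−1, biases b^{i+1} ∈ ℝ^{m_{i+1}}, scalar activations φ^{i+1} incrementally sector bounded by [α^{i+1}, β^{i+1}] on ℝ applied componentwise as Φ^{i+1}, layer maps w⁰(x) = x and w^{i+1}(x) = Φ^{i+1}(W^{i+1}·w^{i}(x) + b^{i+1}), and matrices A ∈ ℝ^{n×n}, g ∈ ℝ^{n×l}, Y ∈ ℝ^{l×n}, W_min ∈ ℝ^{n×mₖ}, c ∈ ℝⁿ. Let λ̲ be the minimum eigenvalue of the symmetric matrix α¹β¹·W¹ᵀW¹ and assume λ̲ ≥ 0. Suppose there exist a symmetric positive definite S ∈ ℝ^{n×n}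 and constants 0 < s̲ ≤ s̄, μ > 0 with s̲·I ⪯ S ⪯ s̄·I such that for all u ∈ ℝⁿ, v⁰ ∈ ℝⁿ and vⁱ ∈ ℝ^{mᵢ}, i = 1,…,k: −μ·‖u‖² + 2·⟨u, S·v⁰⟩ + ⟨v⁰, (AS + SAᵀ + gY + Yᵀgᵀ)·v⁰⟩ + 2·⟨v⁰, W_min·vᵏ⟩ − 2·s̲·λ̲·⟨v⁰, S·v⁰⟩ + 2·(α¹+β¹)·⟨v¹, W¹·S·v⁰⟩ − 2·‖v¹‖² − 2·Σ_{i=1}^{k−1} ⟨v^{i+1} − α^{i+1}·W^{i+1}·vⁱ, v^{i+1} − β^{i+1}·W^{i+1}·vⁱ⟩ ≤ 0. Then, setting H = Y·S⁻¹, any two differentiable functions x₁, x₂ : [0,∞) → ℝⁿ satisfying ẋ(t) = (A + gH)·x(t) + W_min·wᵏ(x(t)) + c for all t ≥ 0 satisfy ‖x₁(t) − x₂(t)‖ ≤ √(s̄/s̲)·e^{−(s̲/(2μ))·t}·‖x₁(0) − x₂(0)‖ for all t ≥ 0. -/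
open Matrix

lemma psd_quad {n : ℕ} {M : Matrix (Fin n) (Fin n) ℝ} (h : M.PosSemidef)
    (x : Fin n → ℝ) : 0 ≤ x ⬝ᵥ M.mulVec x := by
  simpa using h.re_dotProduct_nonneg x

lemma quad_mul_nonneg' {n : ℕ} {S M R : Matrix (Fin n) (Fin n) ℝ}
    (hM : M.PosSemidef) (hRt : Rᵀ = R) (hR : R * R = S)
    (hcomm : R * M = M * R) (y : Fin n → ℝ) :
    0 ≤ y ⬝ᵥ (S * M).mulVec y := by
  subst hR
  have h1 : R * R * M = R * (M * R) := by
    rw [Matrix.mul_assoc, hcomm]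
  rw [h1, ← Matrix.mulVec_mulVec, Matrix.dotProduct_mulVec, ← Matrix.mulVec_transpose, hRt,
    ← Matrix.mulVec_mulVec]
  exact psd_quad hM _

open scoped MatrixOrder in
lemma quad_mul_nonneg {n : ℕ} {S M : Matrix (Fin n) (Fin n) ℝ}
    (hS : S.PosSemidef) (hM : M.PosSemidef) (a b : ℝ)
    (hMab : M = a • (1 : Matrix (Fin n) (Fin n) ℝ) + b • S) (y : Fin n → ℝ) :
    0 ≤ y ⬝ᵥ (S * M).mulVec y := by
  have hRt : (CFC.sqrt S)ᵀ = CFC.sqrt S := by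
    have h2 := (CFC.sqrt_nonneg S).posSemidef.isHermitian
    simpa [Matrix.IsHermitian] using h2
  refine quad_mul_nonneg' hM hRt (CFC.sqrt_mul_sqrt_self S hS.nonneg) ?_ y
  subst hMab
  rw [Matrix.mul_add, Matrix.add_mul, Matrix.mul_smul, Matrix.smul_mul, Matrix.mul_one,
    Matrix.one_mul, Matrix.mul_smul, Matrix.smul_mul]
  congr 1
  have : ∀ (T R : Matrix (Fin n) (Fin n) ℝ), R * R = T → R * T = T * R := by
    intro T R h; subst h; rw [Matrix.mul_assoc]
  rw [this S (CFC.sqrt S) (CFC.sqrt_mul_sqrt_self S hS.nonneg)]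

lemma rayleigh_lower {n : ℕ} {M : Matrix (Fin n) (Fin n) ℝ} (hM : M.IsHermitian)
    {lam : ℝ} (hlam : ∀ i, lam ≤ hM.eigenvalues i) (x : Fin n → ℝ) :
    lam * (x ⬝ᵥ x) ≤ x ⬝ᵥ M.mulVec x := by
  have hpsd : (M - lam • (1 : Matrix (Fin n) (Fin n) ℝ)).PosSemidef := by
    have hU : (hM.eigenvectorUnitary : Matrix (Fin n) (Fin n) ℝ) *
        (star (hM.eigenvectorUnitary : Matrix (Fin n) (Fin n) ℝ)) = 1 :=
      (Matrix.mem_unitaryGroup_iff).mp hM.eigenvectorUnitary.2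
    have hdpsd : (Matrix.diagonal (fun i => hM.eigenvalues i - lam)).PosSemidef :=
      Matrix.posSemidef_diagonal_iff.mpr fun i => sub_nonneg.2 (hlam i)
    have key : M - lam • (1 : Matrix (Fin n) (Fin n) ℝ) =
        (hM.eigenvectorUnitary : Matrix (Fin n) (Fin n) ℝ) *
          (Matrix.diagonal (fun i => hM.eigenvalues i - lam)) *
          ((hM.eigenvectorUnitary : Matrix (Fin n) (Fin n) ℝ))ᴴ := by
      have hspec := hM.spectral_theorem
      rw [Unitary.conjStarAlgAut_apply, Matrix.star_eq_conjTranspose] at hspec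
      have hd : Matrix.diagonal (fun i => hM.eigenvalues i - lam) =
          Matrix.diagonal (RCLike.ofReal ∘ hM.eigenvalues) -
            lam • (1 : Matrix (Fin n) (Fin n) ℝ) := by
        ext i j
        by_cases h : i = j <;> simp [Matrix.diagonal, Matrix.one_apply, h]
      rw [hd, Matrix.mul_sub, Matrix.sub_mul, ← hspec]
      congr 1
      rw [Matrix.mul_smul, Matrix.mul_one, Matrix.smul_mul]
      rw [← Matrix.star_eq_conjTranspose, hU]
    rw [key]
    exact hdpsd.mul_mul_conjTranspose_same _
  have h1 := psd_quad hpsd x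
  have h2 : x ⬝ᵥ (M - lam • (1 : Matrix (Fin n) (Fin n) ℝ)).mulVec x
      = x ⬝ᵥ M.mulVec x - lam * (x ⬝ᵥ x) := by
    simp [Matrix.sub_mulVec, dotProduct_sub, Matrix.smul_mulVec,
      dotProduct_smul, smul_eq_mul]
  linarith [h2 ▸ h1]

lemma dot_SS {n : ℕ} {S : Matrix (Fin n) (Fin n) ℝ} {y : Fin n → ℝ} (hSsym : Sᵀ = S) :
    (S *ᵥ y) ⬝ᵥ (S *ᵥ y) = y ⬝ᵥ (S * S).mulVec y := by
  rw [Matrix.dotProduct_mulVec, ← Matrix.mulVec_transpose, hSsym, Matrix.mulVec_mulVec,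
    dotProduct_comm]

lemma sandwich_lower {n : ℕ} {S : Matrix (Fin n) (Fin n) ℝ} (hS : S.PosDef) {s₁ : ℝ}
    (hSlo : (S - s₁ • (1 : Matrix (Fin n) (Fin n) ℝ)).PosSemidef)
    (w : Fin n → ℝ) : s₁ * (w ⬝ᵥ S⁻¹.mulVec w) ≤ w ⬝ᵥ w := by
  have hSsym : Sᵀ = S := by simpa [Matrix.IsHermitian] using hS.1
  have hdet : IsUnit S.det := hS.det_pos.ne'.isUnit
  have hw : S *ᵥ (S⁻¹ *ᵥ w) = w := by
    rw [Matrix.mulVec_mulVec, Matrix.mul_nonsing_inv S hdet, Matrix.one_mulVec]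
  set y := S⁻¹ *ᵥ w with hy
  have h0 := quad_mul_nonneg hS.posSemidef hSlo (-s₁) 1
    (by rw [neg_smul, one_smul, sub_eq_add_neg, add_comm]) y
  have hexp : S * (S - s₁ • (1 : Matrix (Fin n) (Fin n) ℝ)) = S * S - s₁ • S := by
    rw [Matrix.mul_sub, Matrix.mul_smul, Matrix.mul_one]
  rw [hexp, Matrix.sub_mulVec, dotProduct_sub, Matrix.smul_mulVec,
    dotProduct_smul, smul_eq_mul] at h0
  have e1 : w ⬝ᵥ w = y ⬝ᵥ (S * S).mulVec y := by rw [← hw]; exact dot_SS hSsym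
  have e2 : w ⬝ᵥ y = y ⬝ᵥ S.mulVec y := by
    conv_lhs => rw [← hw]
    exact dotProduct_comm _ _
  rw [e1, e2]; linarith

lemma sandwich_upper {n : ℕ} {S : Matrix (Fin n) (Fin n) ℝ} (hS : S.PosDef) {s₂ : ℝ}
    (hShi : (s₂ • (1 : Matrix (Fin n) (Fin n) ℝ) - S).PosSemidef)
    (w : Fin n → ℝ) : w ⬝ᵥ w ≤ s₂ * (w ⬝ᵥ S⁻¹.mulVec w) := by
  have hSsym : Sᵀ = S := by simpa [Matrix.IsHermitian] using hS.1
  have hdet : IsUnit S.det := hS.det_pos.ne'.isUnit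
  have hw : S *ᵥ (S⁻¹ *ᵥ w) = w := by
    rw [Matrix.mulVec_mulVec, Matrix.mul_nonsing_inv S hdet, Matrix.one_mulVec]
  set y := S⁻¹ *ᵥ w with hy
  have h0 := quad_mul_nonneg hS.posSemidef hShi s₂ (-1)
    (by rw [neg_smul, one_smul, sub_eq_add_neg]) y
  have hexp : S * (s₂ • (1 : Matrix (Fin n) (Fin n) ℝ) - S) = s₂ • S - S * S := by
    rw [Matrix.mul_sub, Matrix.mul_smul, Matrix.mul_one]
  rw [hexp, Matrix.sub_mulVec, dotProduct_sub, Matrix.smul_mulVec,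
    dotProduct_smul, smul_eq_mul] at h0
  have e1 : w ⬝ᵥ w = y ⬝ᵥ (S * S).mulVec y := by rw [← hw]; exact dot_SS hSsym
  have e2 : w ⬝ᵥ y = y ⬝ᵥ S.mulVec y := by
    conv_lhs => rw [← hw]
    exact dotProduct_comm _ _
  rw [e2]; rw [e1]; linarith

section KEY
variable (k : ℕ) (m : ℕ → ℕ) (l : ℕ)

lemma key_ineq (hk : 2 ≤ k)
    (A : Matrix (Fin (m 0)) (Fin (m 0)) ℝ)
    (g : Matrix (Fin (m 0)) (Fin l) ℝ) (Y : Matrix (Fin l) (Fin (m 0)) ℝ)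
    (W : (i : ℕ) → Matrix (Fin (m (i + 1))) (Fin (m i)) ℝ)
    (Wmin : Matrix (Fin (m 0)) (Fin (m k)) ℝ)
    (α β : ℕ → ℝ)
    (hHerm : ((α 0 * β 0) • ((W 0)ᵀ * W 0)).IsHermitian)
    (lam : ℝ) (hlam : ∀ i, lam ≤ hHerm.eigenvalues i) (hlam0 : 0 ≤ lam)
    (S : Matrix (Fin (m 0)) (Fin (m 0)) ℝ) (hS : S.PosDef)
    (s₁ μ : ℝ) (hs₁ : 0 < s₁) (hμ : 0 < μ)
    (hSlo : (S - s₁ • (1 : Matrix (Fin (m 0)) (Fin (m 0)) ℝ)).PosSemidef)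
    (hQF : ∀ (u : Fin (m 0) → ℝ) (v : (i : ℕ) → Fin (m i) → ℝ),
      -μ * (u ⬝ᵥ u) + 2 * (u ⬝ᵥ S.mulVec (v 0))
        + v 0 ⬝ᵥ (A * S + S * Aᵀ + g * Y + Yᵀ * gᵀ).mulVec (v 0)
        + 2 * (v 0 ⬝ᵥ Wmin.mulVec (v k))
        - 2 * s₁ * lam * (v 0 ⬝ᵥ S.mulVec (v 0))
        + 2 * (α 0 + β 0) * (v 1 ⬝ᵥ (W 0 * S).mulVec (v 0))
        - 2 * (v 1 ⬝ᵥ v 1)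
        - 2 * ∑ i ∈ Finset.Ico 1 k,
            (v (i + 1) - α i • (W i).mulVec (v i)) ⬝ᵥ
              (v (i + 1) - β i • (W i).mulVec (v i)) ≤ 0)
    (et : Fin (m 0) → ℝ) (Δ : (i : ℕ) → Fin (m i) → ℝ)
    (hΔ0 : Δ 0 = et)
    (hsecΔ : ∀ i, (Δ (i + 1) - α i • (W i).mulVec (Δ i)) ⬝ᵥ
        (Δ (i + 1) - β i • (W i).mulVec (Δ i)) ≤ 0) :
    2 * (et ⬝ᵥ S⁻¹.mulVec ((A + g * (Y * S⁻¹)).mulVec et + Wmin.mulVec (Δ k)))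
      ≤ -(s₁ / μ) * (et ⬝ᵥ S⁻¹.mulVec et) := by
  have hSsym : Sᵀ = S := by simpa [Matrix.IsHermitian] using hS.1
  have hdet : IsUnit S.det := hS.det_pos.ne'.isUnit
  have hPsym : (S⁻¹)ᵀ = S⁻¹ := by rw [Matrix.transpose_nonsing_inv, hSsym]
  have hSv : ∀ w : Fin (m 0) → ℝ, S *ᵥ (S⁻¹ *ᵥ w) = w := by
    intro w
    rw [Matrix.mulVec_mulVec, Matrix.mul_nonsing_inv S hdet, Matrix.one_mulVec]
  set y := S⁻¹ *ᵥ et with hy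
  have hSvy : S *ᵥ y = et := hSv et
  have hyd : ∀ w : Fin (m 0) → ℝ, et ⬝ᵥ S⁻¹ *ᵥ w = y ⬝ᵥ w := by
    intro w
    rw [Matrix.dotProduct_mulVec, ← Matrix.mulVec_transpose, hPsym]
  have hyS : ∀ w : Fin (m 0) → ℝ, y ⬝ᵥ S *ᵥ w = et ⬝ᵥ w := by
    intro w
    rw [Matrix.dotProduct_mulVec, ← Matrix.mulVec_transpose, hSsym, hSvy]
  -- the test vectors
  set v : (i : ℕ) → Fin (m i) → ℝ :=
    fun i => match i with
      | 0 => y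
      | (j + 1) => Δ (j + 1) with hv
  have hv0 : v 0 = y := rfl
  have hvs : ∀ j : ℕ, j ≠ 0 → v j = Δ j := by
    intro j hj
    cases j with
    | zero => exact absurd rfl hj
    | succ p => rfl
  have hQ := hQF (μ⁻¹ • et) v
  have hvk : v k = Δ k := hvs k (by omega)
  have hv1 : v 1 = Δ 1 := rfl
  rw [hv0, hvk, hv1] at hQ
  -- sector sum is nonpositive
  have hsum : ∑ i ∈ Finset.Ico 1 k,
      (v (i + 1) - α i • (W i).mulVec (v i)) ⬝ᵥ
        (v (i + 1) - β i • (W i).mulVec (v i)) ≤ 0 := by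
    apply Finset.sum_nonpos
    intro i hi
    have hi1 : i ≠ 0 := by
      have := (Finset.mem_Ico.mp hi).1; omega
    rw [hvs i hi1, hvs (i + 1) (by omega)]
    exact hsecΔ i
  -- T1
  have hT1a : (μ⁻¹ • et) ⬝ᵥ (μ⁻¹ • et) = μ⁻¹ * (μ⁻¹ * (et ⬝ᵥ et)) := by
    rw [smul_dotProduct, dotProduct_smul, smul_eq_mul, smul_eq_mul]
  have hT1b : (μ⁻¹ • et) ⬝ᵥ S *ᵥ y = μ⁻¹ * (et ⬝ᵥ et) := by
    rw [smul_dotProduct, smul_eq_mul, hSvy]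
  -- T2
  have hT2 : y ⬝ᵥ (A * S + S * Aᵀ + g * Y + Yᵀ * gᵀ).mulVec y
      + 2 * (y ⬝ᵥ Wmin.mulVec (Δ k))
      = 2 * (et ⬝ᵥ S⁻¹.mulVec ((A + g * (Y * S⁻¹)).mulVec et + Wmin.mulVec (Δ k))) := by
    rw [hyd]
    simp only [Matrix.add_mulVec, dotProduct_add]
    have e1 : y ⬝ᵥ (A * S) *ᵥ y = y ⬝ᵥ A *ᵥ et := by
      rw [← Matrix.mulVec_mulVec, hSvy]
    have e2 : y ⬝ᵥ (S * Aᵀ) *ᵥ y = y ⬝ᵥ A *ᵥ et := by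
      rw [← Matrix.mulVec_mulVec, hyS, Matrix.dotProduct_mulVec, ← Matrix.mulVec_transpose,
        Matrix.transpose_transpose, dotProduct_comm]
    have e3 : y ⬝ᵥ (Yᵀ * gᵀ) *ᵥ y = y ⬝ᵥ (g * Y) *ᵥ y := by
      rw [Matrix.dotProduct_mulVec, ← Matrix.mulVec_transpose, Matrix.transpose_mul,
        Matrix.transpose_transpose, Matrix.transpose_transpose, dotProduct_comm]
    have e4 : y ⬝ᵥ (g * (Y * S⁻¹)) *ᵥ et = y ⬝ᵥ (g * Y) *ᵥ y := by
      rw [← Matrix.mulVec_mulVec, ← Matrix.mulVec_mulVec, ← hy, ← Matrix.mulVec_mulVec]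
    rw [e1, e2, e3, e4]
    ring
  -- T3
  have hT3 : y ⬝ᵥ S *ᵥ y = et ⬝ᵥ S⁻¹ *ᵥ et := by rw [hyS, hyd, dotProduct_comm]
  -- T4
  have hT4 : (W 0 * S) *ᵥ y = (W 0) *ᵥ et := by rw [← Matrix.mulVec_mulVec, hSvy]
  -- layer 1 sector, expanded
  have hL1 : Δ 1 ⬝ᵥ Δ 1 - (α 0 + β 0) * (Δ 1 ⬝ᵥ (W 0) *ᵥ et)
      + α 0 * β 0 * (((W 0) *ᵥ et) ⬝ᵥ ((W 0) *ᵥ et)) ≤ 0 := by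
    have h := hsecΔ 0
    rw [hΔ0] at h
    have hcomm : ((W 0) *ᵥ et) ⬝ᵥ Δ 1 = Δ 1 ⬝ᵥ ((W 0) *ᵥ et) := dotProduct_comm _ _
    rw [dotProduct_sub, sub_dotProduct, sub_dotProduct,
      dotProduct_smul, smul_dotProduct, smul_dotProduct,
      dotProduct_smul, smul_eq_mul, smul_eq_mul, smul_eq_mul, smul_eq_mul, hcomm] at h
    nlinarith [h]
  -- Rayleigh
  have hRay : lam * (et ⬝ᵥ et) ≤ α 0 * β 0 * (((W 0) *ᵥ et) ⬝ᵥ ((W 0) *ᵥ et)) := by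
    have h := rayleigh_lower hHerm hlam et
    have e : et ⬝ᵥ ((α 0 * β 0) • ((W 0)ᵀ * W 0)).mulVec et
        = α 0 * β 0 * (((W 0) *ᵥ et) ⬝ᵥ ((W 0) *ᵥ et)) := by
      rw [Matrix.smul_mulVec, dotProduct_smul, smul_eq_mul,
        ← Matrix.mulVec_mulVec, Matrix.dotProduct_mulVec, ← Matrix.mulVec_transpose,
        Matrix.transpose_transpose]
    rw [e] at h
    exact h
  -- sandwich lower
  have hSand : s₁ * (et ⬝ᵥ S⁻¹ *ᵥ et) ≤ et ⬝ᵥ et := sandwich_lower hS hSlo et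
  -- assemble
  rw [hT1a, hT1b, hT3] at hQ
  set Vv := et ⬝ᵥ S⁻¹ *ᵥ et with hVv
  set q := ((W 0) *ᵥ et) ⬝ᵥ ((W 0) *ᵥ et) with hq
  set nrm := et ⬝ᵥ et with hnrm
  rw [hT4] at hQ
  -- hQ : -μ * (μ⁻¹*(μ⁻¹*nrm)) + 2*(μ⁻¹*nrm) + [bigsum] ≤ 0
  have hbig : y ⬝ᵥ (A * S + S * Aᵀ + g * Y + Yᵀ * gᵀ).mulVec y
      + 2 * (y ⬝ᵥ Wmin.mulVec (Δ k))
      = 2 * (et ⬝ᵥ S⁻¹.mulVec ((A + g * (Y * S⁻¹)).mulVec et + Wmin.mulVec (Δ k))) := hT2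
  set LHS := et ⬝ᵥ S⁻¹.mulVec ((A + g * (Y * S⁻¹)).mulVec et + Wmin.mulVec (Δ k)) with hLHS
  have hμinv : 0 < μ⁻¹ := inv_pos.mpr hμ
  have p1 : lam * (s₁ * Vv) ≤ lam * nrm := mul_le_mul_of_nonneg_left hSand hlam0
  have p2 : μ⁻¹ * (s₁ * Vv) ≤ μ⁻¹ * nrm := mul_le_mul_of_nonneg_left hSand hμinv.le
  have hdiv : s₁ / μ = μ⁻¹ * s₁ := by field_simp
  have hμμ : -μ * (μ⁻¹ * (μ⁻¹ * nrm)) = -(μ⁻¹ * nrm) := by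
    rw [show -μ * (μ⁻¹ * (μ⁻¹ * nrm)) = -((μ * μ⁻¹) * (μ⁻¹ * nrm)) from by ring,
      mul_inv_cancel₀ hμ.ne', one_mul]
  set sigt := ∑ i ∈ Finset.Ico 1 k, (v (i + 1) - α i • (W i).mulVec (v i)) ⬝ᵥ (v (i + 1) - β i • (W i).mulVec (v i)) with hsigt
  set d := Δ 1 ⬝ᵥ (W 0) *ᵥ et with hd
  set p := Δ 1 ⬝ᵥ Δ 1 with hp
  have c1 : 2 * LHS ≤ -(μ⁻¹ * nrm) + 2 * s₁ * lam * Vv - 2 * (α 0 + β 0) * d + 2 * p + 2 * sigt := by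
    linarith [hQ, hμμ, hT2]
  have c2 : 2 * p - 2 * (α 0 + β 0) * d ≤ -2 * (α 0 * β 0 * q) := by linarith [hL1]
  have c3 : 2 * s₁ * lam * Vv ≤ 2 * (lam * nrm) := by linarith [p1]
  have c4 : 2 * LHS ≤ -(μ⁻¹ * nrm) := by linarith [c1, c2, c3, hRay, hsum]
  have c5 : -(μ⁻¹ * nrm) ≤ -(s₁ / μ) * Vv := by
    rw [hdiv]; linarith [p2]
  linarith [c4, c5]
end KEY

/-- Theorem 7: with `H = Y S⁻¹`, the convex quadratic-form condition on
`(S, Y, μ)` guarantees contraction of the controlled multilayer system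
`ẋ = (A + gH) x + W_min wᵏ(x) + c`. Here `lam` is the minimum eigenvalue of
`α¹β¹ · W¹ᵀW¹`, assumed nonnegative. -/
theorem controlled_multilayer_contractive_LMI
    (k : ℕ) (hk : 2 ≤ k) (m : ℕ → ℕ) (l : ℕ)
    (A : Matrix (Fin (m 0)) (Fin (m 0)) ℝ)
    (g : Matrix (Fin (m 0)) (Fin l) ℝ) (Y : Matrix (Fin l) (Fin (m 0)) ℝ)
    (W : (i : ℕ) → Matrix (Fin (m (i + 1))) (Fin (m i)) ℝ)
    (b : (i : ℕ) → Fin (m (i + 1)) → ℝ)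
    (Wmin : Matrix (Fin (m 0)) (Fin (m k)) ℝ) (c : Fin (m 0) → ℝ)
    (φ : ℕ → ℝ → ℝ) (α β : ℕ → ℝ)
    (hsec : ∀ i, ∀ a d : ℝ,
      (φ i a - φ i d - α i * (a - d)) * (φ i a - φ i d - β i * (a - d)) ≤ 0)
    (hHerm : ((α 0 * β 0) • ((W 0)ᵀ * W 0)).IsHermitian)
    (lam : ℝ) (hlam : IsLeast (Set.range hHerm.eigenvalues) lam) (hlam0 : 0 ≤ lam)
    (S : Matrix (Fin (m 0)) (Fin (m 0)) ℝ) (hS : S.PosDef)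
    (s₁ s₂ μ : ℝ) (hs₁ : 0 < s₁) (hs₁₂ : s₁ ≤ s₂) (hμ : 0 < μ)
    (hSlo : (S - s₁ • (1 : Matrix (Fin (m 0)) (Fin (m 0)) ℝ)).PosSemidef)
    (hShi : (s₂ • (1 : Matrix (Fin (m 0)) (Fin (m 0)) ℝ) - S).PosSemidef)
    (hQF : ∀ (u : Fin (m 0) → ℝ) (v : (i : ℕ) → Fin (m i) → ℝ),
      -μ * (u ⬝ᵥ u) + 2 * (u ⬝ᵥ S.mulVec (v 0))
        + v 0 ⬝ᵥ (A * S + S * Aᵀ + g * Y + Yᵀ * gᵀ).mulVec (v 0)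
        + 2 * (v 0 ⬝ᵥ Wmin.mulVec (v k))
        - 2 * s₁ * lam * (v 0 ⬝ᵥ S.mulVec (v 0))
        + 2 * (α 0 + β 0) * (v 1 ⬝ᵥ (W 0 * S).mulVec (v 0))
        - 2 * (v 1 ⬝ᵥ v 1)
        - 2 * ∑ i ∈ Finset.Ico 1 k,
            (v (i + 1) - α i • (W i).mulVec (v i)) ⬝ᵥ
              (v (i + 1) - β i • (W i).mulVec (v i)) ≤ 0)
    (x₁ x₂ : ℝ → Fin (m 0) → ℝ)
    (hx₁ : ∀ t, 0 ≤ t → HasDerivAt x₁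
      ((A + g * (Y * S⁻¹)).mulVec (x₁ t)
        + Wmin.mulVec (nnLayer m W b φ k (x₁ t)) + c) t)
    (hx₂ : ∀ t, 0 ≤ t → HasDerivAt x₂
      ((A + g * (Y * S⁻¹)).mulVec (x₂ t)
        + Wmin.mulVec (nnLayer m W b φ k (x₂ t)) + c) t) :
    ∀ t, 0 ≤ t →
      eNorm (x₁ t - x₂ t) ≤
        Real.sqrt (s₂ / s₁) * Real.exp (-(s₁ / (2 * μ)) * t) * eNorm (x₁ 0 - x₂ 0) := by
  have hSsym : Sᵀ = S := by simpa [Matrix.IsHermitian] using hS.1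
  have hdet : IsUnit S.det := hS.det_pos.ne'.isUnit
  have hPsym : (S⁻¹)ᵀ = S⁻¹ := by rw [Matrix.transpose_nonsing_inv, hSsym]
  have hlam' : ∀ i, lam ≤ hHerm.eigenvalues i := fun i => hlam.2 ⟨i, rfl⟩
  set e : ℝ → Fin (m 0) → ℝ := fun τ => x₁ τ - x₂ τ with he
  set D : ℝ → Fin (m 0) → ℝ := fun τ =>
    (A + g * (Y * S⁻¹)).mulVec (e τ)
      + Wmin.mulVec (nnLayer m W b φ k (x₁ τ) - nnLayer m W b φ k (x₂ τ)) with hDdef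
  have hDer : ∀ t, 0 ≤ t → HasDerivAt e (D t) t := by
    intro t ht
    have h := (hx₁ t ht).sub (hx₂ t ht)
    convert h using 1
    case e'_9 =>
      simp only [hDdef, he, Matrix.mulVec_sub]
      abel
    all_goals rfl
  set V : ℝ → ℝ := fun τ => e τ ⬝ᵥ S⁻¹.mulVec (e τ) with hVdef
  have hVDer : ∀ t, 0 ≤ t → HasDerivAt V (2 * (e t ⬝ᵥ S⁻¹.mulVec (D t))) t := by
    intro t ht
    have hei : ∀ i, HasDerivAt (fun τ => e τ i) (D t i) t :=
      fun i => hasDerivAt_pi.1 (hDer t ht) i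
    have hsum : HasDerivAt (fun τ => ∑ i, e τ i * ∑ j, S⁻¹ i j * e τ j)
        (∑ i, (D t i * ∑ j, S⁻¹ i j * e t j + e t i * ∑ j, S⁻¹ i j * D t j)) t := by
      apply HasDerivAt.fun_sum
      intro i _
      exact (hei i).mul (HasDerivAt.fun_sum fun j _ => HasDerivAt.const_mul (S⁻¹ i j) (hei j))
    convert hsum using 1
    · rfl
    have hsplit : ∑ i, (D t i * ∑ j, S⁻¹ i j * e t j + e t i * ∑ j, S⁻¹ i j * D t j)
        = D t ⬝ᵥ S⁻¹.mulVec (e t) + e t ⬝ᵥ S⁻¹.mulVec (D t) := by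
      rw [Finset.sum_add_distrib]
      simp [dotProduct, Matrix.mulVec]
    rw [hsplit]
    have hflip : D t ⬝ᵥ S⁻¹.mulVec (e t) = e t ⬝ᵥ S⁻¹.mulVec (D t) := by
      rw [Matrix.dotProduct_mulVec, ← Matrix.mulVec_transpose, hPsym, dotProduct_comm]
    rw [hflip]; ring
  have hKey : ∀ t, 0 ≤ t → 2 * (e t ⬝ᵥ S⁻¹.mulVec (D t)) ≤ -(s₁ / μ) * V t := by
    intro t ht
    have hsecΔ : ∀ i,
        ((nnLayer m W b φ (i + 1) (x₁ t) - nnLayer m W b φ (i + 1) (x₂ t))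
            - α i • (W i).mulVec (nnLayer m W b φ i (x₁ t) - nnLayer m W b φ i (x₂ t))) ⬝ᵥ
          ((nnLayer m W b φ (i + 1) (x₁ t) - nnLayer m W b φ (i + 1) (x₂ t))
            - β i • (W i).mulVec (nnLayer m W b φ i (x₁ t) - nnLayer m W b φ i (x₂ t))) ≤ 0 := by
      intro i
      rw [dotProduct]
      apply Finset.sum_nonpos
      intro j _
      have ha := hsec i ((W i).mulVec (nnLayer m W b φ i (x₁ t)) j + b i j)
        ((W i).mulVec (nnLayer m W b φ i (x₂ t)) j + b i j)
      have harg : ((W i).mulVec (nnLayer m W b φ i (x₁ t)) j + b i j)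
          - ((W i).mulVec (nnLayer m W b φ i (x₂ t)) j + b i j)
          = (W i).mulVec (nnLayer m W b φ i (x₁ t)) j
            - (W i).mulVec (nnLayer m W b φ i (x₂ t)) j := by ring
      rw [harg] at ha
      simpa [nnLayer, Matrix.mulVec_sub, Pi.sub_apply, Pi.smul_apply, smul_eq_mul,
        mul_sub, sub_mul] using ha
    exact key_ineq k m l hk A g Y W Wmin α β hHerm lam hlam' hlam0 S hS s₁ μ hs₁ hμ hSlo hQF
      (e t) (fun i => nnLayer m W b φ i (x₁ t) - nnLayer m W b φ i (x₂ t)) rfl hsecΔ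
  set c0 := s₁ / μ with hc0
  have hc0pos : 0 < c0 := div_pos hs₁ hμ
  set f : ℝ → ℝ := fun τ => Real.exp (c0 * τ) * V τ with hf
  have hfDer : ∀ t, 0 ≤ t → HasDerivAt f
      (Real.exp (c0 * t) * c0 * V t
        + Real.exp (c0 * t) * (2 * (e t ⬝ᵥ S⁻¹.mulVec (D t)))) t := by
    intro t ht
    have h1 : HasDerivAt (fun τ : ℝ => c0 * τ) c0 t := by
      simpa using (hasDerivAt_id t).const_mul c0
    have h2 := (h1.exp).mul (hVDer t ht)
    convert h2 using 1
    all_goals rfl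
    try ring
    try ring_nf
  have hanti : AntitoneOn f (Set.Ici (0 : ℝ)) := by
    apply antitoneOn_of_deriv_nonpos (convex_Ici 0)
    · intro τ hτ
      exact (hfDer τ hτ).continuousAt.continuousWithinAt
    · rw [interior_Ici]
      intro τ hτ
      exact (hfDer τ hτ.le).differentiableAt.differentiableWithinAt
    · rw [interior_Ici]
      intro τ hτ
      rw [(hfDer τ hτ.le).deriv]
      have hK := hKey τ hτ.le
      have hexp := Real.exp_pos (c0 * τ)
      nlinarith [mul_le_mul_of_nonneg_left hK hexp.le]
  have hV0 : ∀ t, 0 ≤ t → V t ≤ Real.exp (-c0 * t) * V 0 := by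
    intro t ht
    have h := hanti Set.self_mem_Ici (Set.mem_Ici.mpr ht) ht
    have hf0 : f 0 = V 0 := by simp [hf]
    rw [hf0] at h
    have h2 := mul_le_mul_of_nonneg_left h (Real.exp_pos (-c0 * t)).le
    calc V t = Real.exp (-c0 * t) * (Real.exp (c0 * t) * V t) := by
          rw [← mul_assoc, ← Real.exp_add, show -c0 * t + c0 * t = 0 by ring,
            Real.exp_zero, one_mul]
      _ ≤ Real.exp (-c0 * t) * V 0 := h2
  intro t ht
  have hup : e t ⬝ᵥ e t ≤ s₂ * V t := sandwich_upper hS hShi (e t)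
  have hlo : s₁ * V 0 ≤ e 0 ⬝ᵥ e 0 := sandwich_lower hS hSlo (e 0)
  have hVt := hV0 t ht
  have hexp := Real.exp_pos (-c0 * t)
  have hfrac : 0 ≤ s₂ / s₁ := div_nonneg (by linarith) hs₁.le
  have hA1 : s₂ * V t ≤ s₂ * (Real.exp (-c0 * t) * V 0) :=
    mul_le_mul_of_nonneg_left hVt (by linarith)
  have hA2 : Real.exp (-c0 * t) * (s₁ * V 0) ≤ Real.exp (-c0 * t) * (e 0 ⬝ᵥ e 0) :=
    mul_le_mul_of_nonneg_left hlo hexp.le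
  have h3 : e t ⬝ᵥ e t ≤ s₂ / s₁ * Real.exp (-c0 * t) * (e 0 ⬝ᵥ e 0) := by
    have heq : s₂ * (Real.exp (-c0 * t) * V 0)
        = s₂ / s₁ * (Real.exp (-c0 * t) * (s₁ * V 0)) := by
      field_simp
    have h4 : s₂ / s₁ * (Real.exp (-c0 * t) * (s₁ * V 0))
        ≤ s₂ / s₁ * (Real.exp (-c0 * t) * (e 0 ⬝ᵥ e 0)) :=
      mul_le_mul_of_nonneg_left hA2 hfrac
    calc e t ⬝ᵥ e t ≤ s₂ * V t := hup
      _ ≤ s₂ * (Real.exp (-c0 * t) * V 0) := hA1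
      _ = s₂ / s₁ * (Real.exp (-c0 * t) * (s₁ * V 0)) := heq
      _ ≤ s₂ / s₁ * (Real.exp (-c0 * t) * (e 0 ⬝ᵥ e 0)) := h4
      _ = s₂ / s₁ * Real.exp (-c0 * t) * (e 0 ⬝ᵥ e 0) := by ring
  -- convert to norms
  show Real.sqrt (e t ⬝ᵥ e t) ≤
    Real.sqrt (s₂ / s₁) * Real.exp (-(s₁ / (2 * μ)) * t) * Real.sqrt (e 0 ⬝ᵥ e 0)
  have hexpsq : Real.exp (-(s₁ / (2 * μ)) * t) = Real.sqrt (Real.exp (-c0 * t)) := by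
    have harg : -(s₁ / (2 * μ)) * t = -c0 * t / 2 := by
      rw [hc0]; ring
    rw [harg, Real.exp_half]
  rw [hexpsq, ← Real.sqrt_mul hfrac, ← Real.sqrt_mul
    (mul_nonneg hfrac (Real.exp_pos (-c0 * t)).le)]
  exact Real.sqrt_le_sqrt h3
end
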